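/- arXiv:0904.2933 — 9 statements merged into one kernel-verified Lean document; each statement's English description precedes it below -/
import Mathlib

section
/- Let c > 0, let M ∈ ℝ be a nonzero constant, let φ_σ : ℝ⁴ → ℝ (σ = 1,…,4) and ψ : ℝ⁴ → ℝ be C¹ functions, let q : ℝ → ℝ⁴ be a twice differentiable curve and λ : ℝ → ℝ a function. Suppose that for all s: (i) Mc² + Σ_{p=1}^{3}(q̇^p(s))² > 0 and the constraint q̇⁴(s) = √(Mc² + Σ_{p=1}^{3}(q̇^p(s))²) holds; (ii) the Chetaev equations hold: for l = 1,2,3, −q̈^l + Σ_σ q̇^σ(∂φ_σ/∂q^l − ∂φ_l/∂q^σ) − ∂ψ/∂q^l = −λ(s) q̇^l/√(Mc² + Σ_p(q̇^p)²), and q̈⁴ + Σ_σ q̇^σ(∂φ_σ/∂q⁴ − ∂φ_4/∂q^σ) − ∂ψ/∂q⁴ = λ(s). Then for all s and all j = 1,2,3 the reduced equations in normal form hold: q̈^j = Σ_{l=1}^{3} q̇^l(∂φ_l/∂q^j − ∂φ_j/∂q^l) + √(Mc² + Σ_p(q̇^p)²)·(∂φ_4/∂q^j − ∂φ_j/∂q⁴)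 − ∂ψ/∂q^j − (q̇^j/(Mc²))·(Σ_{l=1}^{3} q̇^l ∂ψ/∂q^l + √(Mc² + Σ_p(q̇^p)²)·∂ψ/∂q⁴), where all partial derivatives of φ_σ and ψ are evaluated at q(s). -/
/-- Component `σ` of the velocity of a curve in `ℝ⁴`. -/
noncomputable def vel (q : ℝ → Fin 4 → ℝ) (σ : Fin 4) (s : ℝ) : ℝ :=
  deriv (fun τ => q τ σ) s

/-- Component `σ` of the acceleration of a curve in `ℝ⁴`. -/
noncomputable def acc (q : ℝ → Fin 4 → ℝ) (σ : Fin 4) (s : ℝ) : ℝ :=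
  deriv (vel q σ) s

/-- Partial derivative `∂f/∂q^σ` of a function on `ℝ⁴`. -/
noncomputable def pd (f : (Fin 4 → ℝ) → ℝ) (σ : Fin 4) (x : Fin 4 → ℝ) : ℝ :=
  fderiv ℝ f x (Pi.single σ 1)

/-- for a nonzero constant `M`, the Chetaev equations together with the
nonholonomic constraint `q̇⁴ = √(Mc² + Σ_p(q̇^p)²)` imply the reduced equations in
normal form.  (Index `3 : Fin 4` is the time index; `l.castSucc` for `l : Fin 3`
are the spatial indices.) -/
theorem stmt3 (c M : ℝ) (hc : 0 < c) (hM : M ≠ 0)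
    (φ : Fin 4 → (Fin 4 → ℝ) → ℝ) (ψ : (Fin 4 → ℝ) → ℝ)
    (hφ : ∀ σ, ContDiff ℝ 1 (φ σ)) (hψ : ContDiff ℝ 1 ψ)
    (q : ℝ → Fin 4 → ℝ) (lam : ℝ → ℝ)
    (hq1 : ∀ σ, Differentiable ℝ fun s => q s σ)
    (hq2 : ∀ σ, Differentiable ℝ (vel q σ))
    (hpos : ∀ s, 0 < M * c ^ 2 + ∑ p : Fin 3, vel q p.castSucc s ^ 2)
    (hcon : ∀ s, vel q 3 s =
      Real.sqrt (M * c ^ 2 + ∑ p : Fin 3, vel q p.castSucc s ^ 2))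
    (hchet1 : ∀ s, ∀ l : Fin 3,
      -acc q l.castSucc s
        + (∑ σ, vel q σ s * (pd (φ σ) l.castSucc (q s) - pd (φ l.castSucc) σ (q s)))
        - pd ψ l.castSucc (q s)
      = -(lam s * vel q l.castSucc s)
          / Real.sqrt (M * c ^ 2 + ∑ p : Fin 3, vel q p.castSucc s ^ 2))
    (hchet2 : ∀ s,
      acc q 3 s + (∑ σ, vel q σ s * (pd (φ σ) 3 (q s) - pd (φ 3) σ (q s)))
        - pd ψ 3 (q s) = lam s) :
    ∀ s, ∀ j : Fin 3,
      acc q j.castSucc s =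
        (∑ l : Fin 3, vel q l.castSucc s *
            (pd (φ l.castSucc) j.castSucc (q s) - pd (φ j.castSucc) l.castSucc (q s)))
          + Real.sqrt (M * c ^ 2 + ∑ p : Fin 3, vel q p.castSucc s ^ 2) *
              (pd (φ 3) j.castSucc (q s) - pd (φ j.castSucc) 3 (q s))
          - pd ψ j.castSucc (q s)
          - vel q j.castSucc s / (M * c ^ 2) *
              ((∑ l : Fin 3, vel q l.castSucc s * pd ψ l.castSucc (q s))
                + Real.sqrt (M * c ^ 2 + ∑ p : Fin 3, vel q p.castSucc s ^ 2) *
                    pd ψ 3 (q s)) := by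

  intro s j
  set A : ℝ := M * c ^ 2 + ∑ p : Fin 3, vel q p.castSucc s ^ 2 with hAdef
  have hApos : 0 < A := hpos s
  set r : ℝ := Real.sqrt A with hrdef
  have hrpos : 0 < r := Real.sqrt_pos.mpr hApos
  have hr0 : r ≠ 0 := ne_of_gt hrpos
  have hr2 : r ^ 2 = A := Real.sq_sqrt hApos.le
  have hv3 : vel q 3 s = r := hcon s
  -- calculus: a₃ * r = Σ v_l a_l
  have hkey : acc q 3 s * r
      = ∑ p : Fin 3, vel q p.castSucc s * acc q p.castSucc s := by
    have hg : HasDerivAt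
        (fun τ => M * c ^ 2 + ∑ p : Fin 3, vel q p.castSucc τ ^ 2)
        (∑ p : Fin 3, (2:ℕ) * vel q p.castSucc s ^ 1 * acc q p.castSucc s) s := by
      have hsum : HasDerivAt
          (fun τ => ∑ p : Fin 3, vel q p.castSucc τ ^ 2)
          (∑ p : Fin 3, (2:ℕ) * vel q p.castSucc s ^ 1 * acc q p.castSucc s) s := by
        apply HasDerivAt.fun_sum
        intro p _
        exact ((hq2 p.castSucc s).hasDerivAt).pow 2
      exact hsum.const_add (M * c ^ 2)
    have hAne : (M * c ^ 2 + ∑ p : Fin 3, vel q p.castSucc s ^ 2) ≠ 0 :=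
      ne_of_gt (hpos s)
    have hsq := hg.sqrt hAne
    have hv3fun : vel q 3 = fun τ =>
        Real.sqrt (M * c ^ 2 + ∑ p : Fin 3, vel q p.castSucc τ ^ 2) := by
      funext τ; exact hcon τ
    have h3 : acc q 3 s
        = (∑ p : Fin 3, (2:ℕ) * vel q p.castSucc s ^ 1 * acc q p.castSucc s)
          / (2 * r) := by
      show deriv (vel q 3) s = _
      rw [hv3fun]
      exact hsq.deriv
    rw [h3]
    field_simp
    rw [Finset.mul_sum]
    apply Finset.sum_congr rfl
    intro p _
    ring
  -- cleared Chetaev-1 equations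
  have E : ∀ l : Fin 3,
      (-acc q l.castSucc s
        + (∑ σ, vel q σ s * (pd (φ σ) l.castSucc (q s) - pd (φ l.castSucc) σ (q s)))
        - pd ψ l.castSucc (q s)) * r = -(lam s * vel q l.castSucc s) := by
    intro l
    have h := hchet1 s l
    rw [← hAdef, ← hrdef] at h
    rw [h]
    field_simp
  have E4 := hchet2 s
  -- expand the Fin 4 sums
  have c0 : ((0 : Fin 3).castSucc) = (0 : Fin 4) := rfl
  have c1 : ((1 : Fin 3).castSucc) = (1 : Fin 4) := rfl
  have c2 : ((2 : Fin 3).castSucc) = (2 : Fin 4) := rfl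
  have E0 := E 0
  have E1 := E 1
  have E2 := E 2
  simp only [Fin.sum_univ_four, Fin.sum_univ_three, c0, c1, c2]
    at E0 E1 E2 E4 hkey ⊢
  rw [hv3] at E0 E1 E2 E4
  have hr2' : r ^ 2 = M * c ^ 2
      + (vel q 0 s ^ 2 + vel q 1 s ^ 2 + vel q 2 s ^ 2) := by
    rw [hr2, hAdef]
    simp only [Fin.sum_univ_three, c0, c1, c2]
  -- the Lagrange multiplier identity
  have hlam : lam s * (M * c ^ 2) =
      -(r * (vel q 0 s * pd ψ 0 (q s) + vel q 1 s * pd ψ 1 (q s)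
              + vel q 2 s * pd ψ 2 (q s))
        + r ^ 2 * pd ψ 3 (q s)) := by
    linear_combination (-(r ^ 2)) * E4 + r * hkey - vel q 0 s * E0
      - vel q 1 s * E1 - vel q 2 s * E2 - lam s * hr2'
  have hMc : M * c ^ 2 ≠ 0 := mul_ne_zero hM (pow_ne_zero 2 hc.ne')
  have hrM : r * (M * c ^ 2) ≠ 0 := mul_ne_zero hr0 hMc
  fin_cases j <;>
    simp only [Fin.isValue, Fin.mk_zero, Fin.mk_one, Fin.reduceFinMk, c0, c1, c2] <;>
    field_simp <;>
    apply mul_right_cancel₀ hr0 <;>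
    [linear_combination (-(M * c ^ 2)) * E0 + vel q 0 s * hlam;
     linear_combination (-(M * c ^ 2)) * E1 + vel q 1 s * hlam;
     linear_combination (-(M * c ^ 2)) * E2 + vel q 2 s * hlam]
end

section
/- Let c > 0, let M : ℝ⁴ → ℝ, φ_σ : ℝ⁴ → ℝ (σ = 1,…,4) and ψ : ℝ⁴ → ℝ be C¹ functions, let q : ℝ → ℝ⁴ be a twice differentiable curve and λ : ℝ → ℝ a function such that for all s: M(q(s))c² + Σ_{p=1}^{3}(q̇^p(s))² > 0, the constraint q̇⁴(s) = √(M(q(s))c² + Σ_p(q̇^p(s))²) holds, and the Chetaev equations hold: for l = 1,2,3, −q̈^l + Σ_σ q̇^σ(∂φ_σ/∂q^l − ∂φ_l/∂q^σ) − ∂ψ/∂q^l = −λ q̇^l/√(M(q)c² + Σ_p(q̇^p)²), and q̈⁴ + Σ_σ q̇^σ(∂φ_σ/∂q⁴ − ∂φ_4/∂q^σ) − ∂ψ/∂q⁴ = λ. Then for all s, (d/ds)[(1/2)M(q(s))c² − ψ(q(s))] = λ(s)·M(q(s))c²/√(M(q(s))c² + Σ_p(q̇^p(s))²). Consequently, if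 moreover M(q(s)) ≠ 0 for all s, the multiplier is determined: λ(s) = (√(M(q(s))c² + Σ_p(q̇^p(s))²)/(M(q(s))c²))·(d/ds)[(1/2)M(q(s))c² − ψ(q(s))]. -/
/-- along solutions of the Chetaev equations lying in the constraint
`q̇⁴ = √(M(q)c² + Σ_p(q̇^p)²)` one has
`(d/ds)[½M(q)c² − ψ(q)] = λ·M(q)c²/√(M(q)c² + Σ_p(q̇^p)²)`;
consequently, if `M(q(s)) ≠ 0` for all `s`, the multiplier `λ` is determined. -/
theorem stmt4 (c : ℝ) (hc : 0 < c)
    (M : (Fin 4 → ℝ) → ℝ) (φ : Fin 4 → (Fin 4 → ℝ) → ℝ) (ψ : (Fin 4 → ℝ) → ℝ)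
    (hM : ContDiff ℝ 1 M) (hφ : ∀ σ, ContDiff ℝ 1 (φ σ)) (hψ : ContDiff ℝ 1 ψ)
    (q : ℝ → Fin 4 → ℝ) (lam : ℝ → ℝ)
    (hq1 : ∀ σ, Differentiable ℝ fun s => q s σ)
    (hq2 : ∀ σ, Differentiable ℝ (vel q σ))
    (hpos : ∀ s, 0 < M (q s) * c ^ 2 + ∑ p : Fin 3, vel q p.castSucc s ^ 2)
    (hcon : ∀ s, vel q 3 s =
      Real.sqrt (M (q s) * c ^ 2 + ∑ p : Fin 3, vel q p.castSucc s ^ 2))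
    (hchet1 : ∀ s, ∀ l : Fin 3,
      -acc q l.castSucc s
        + (∑ σ, vel q σ s * (pd (φ σ) l.castSucc (q s) - pd (φ l.castSucc) σ (q s)))
        - pd ψ l.castSucc (q s)
      = -(lam s * vel q l.castSucc s)
          / Real.sqrt (M (q s) * c ^ 2 + ∑ p : Fin 3, vel q p.castSucc s ^ 2))
    (hchet2 : ∀ s,
      acc q 3 s + (∑ σ, vel q σ s * (pd (φ σ) 3 (q s) - pd (φ 3) σ (q s)))
        - pd ψ 3 (q s) = lam s) :
    (∀ s, deriv (fun τ => (1 / 2) * M (q τ) * c ^ 2 - ψ (q τ)) s =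
        lam s * (M (q s) * c ^ 2)
          / Real.sqrt (M (q s) * c ^ 2 + ∑ p : Fin 3, vel q p.castSucc s ^ 2)) ∧
      ((∀ s, M (q s) ≠ 0) → ∀ s,
        lam s =
          Real.sqrt (M (q s) * c ^ 2 + ∑ p : Fin 3, vel q p.castSucc s ^ 2)
              / (M (q s) * c ^ 2)
            * deriv (fun τ => (1 / 2) * M (q τ) * c ^ 2 - ψ (q τ)) s) := by
  have key : ∀ s, deriv (fun τ => (1 / 2) * M (q τ) * c ^ 2 - ψ (q τ)) s =
      lam s * (M (q s) * c ^ 2)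
        / Real.sqrt (M (q s) * c ^ 2 + ∑ p : Fin 3, vel q p.castSucc s ^ 2) := by
    intro s
    set r : ℝ := Real.sqrt (M (q s) * c ^ 2 + ∑ p : Fin 3, vel q p.castSucc s ^ 2) with hrdef
    have hr : 0 < r := Real.sqrt_pos.2 (hpos s)
    have hr2 : r ^ 2 = M (q s) * c ^ 2 + ∑ p : Fin 3, vel q p.castSucc s ^ 2 :=
      Real.sq_sqrt (hpos s).le
    -- velocity/acceleration derivative facts
    have hv : ∀ σ, HasDerivAt (vel q σ) (acc q σ s) s :=
      fun σ => ((hq2 σ) s).hasDerivAt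
    have hq' : HasDerivAt q (fun σ => vel q σ s) s :=
      hasDerivAt_pi.mpr (fun σ => ((hq1 σ) s).hasDerivAt)
    have hψq : HasDerivAt (fun τ => ψ (q τ))
        (fderiv ℝ ψ (q s) (fun σ => vel q σ s)) s :=
      ((hψ.differentiable one_ne_zero (q s)).hasFDerivAt).comp_hasDerivAt s hq'
    have hLw : fderiv ℝ ψ (q s) (fun σ => vel q σ s)
        = ∑ σ : Fin 4, vel q σ s * pd ψ σ (q s) := by
      have hw : (fun σ => vel q σ s) = ∑ σ : Fin 4, vel q σ s • (Pi.single σ (1:ℝ) : Fin 4 → ℝ) := by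
        funext j
        simp [Finset.sum_apply, Pi.single_apply]
      rw [hw, map_sum]
      simp [pd, smul_eq_mul]
    -- rewrite the energy function using the constraint
    have hfun : (fun τ => (1 / 2) * M (q τ) * c ^ 2 - ψ (q τ))
        = fun τ => (1/2) * (vel q 3 τ ^ 2 - ∑ p : Fin 3, vel q p.castSucc τ ^ 2) - ψ (q τ) := by
      funext τ
      have := hcon τ
      have h2 : vel q 3 τ ^ 2 = M (q τ) * c ^ 2 + ∑ p : Fin 3, vel q p.castSucc τ ^ 2 := by
        rw [this]; exact Real.sq_sqrt (hpos τ).le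
      rw [h2]; ring
    have h3sq : HasDerivAt (fun τ => vel q 3 τ ^ 2) (2 * vel q 3 s * acc q 3 s) s := by
      have := (hv 3).pow 2
      simp at this; exact this
    have hsum : HasDerivAt (fun τ => ∑ p : Fin 3, vel q p.castSucc τ ^ 2)
        (∑ p : Fin 3, 2 * vel q p.castSucc s * acc q p.castSucc s) s := by
      apply HasDerivAt.fun_sum
      intro p _
      have := (hv p.castSucc).pow 2
      simp at this; exact this
    have hD : HasDerivAt (fun τ => (1 / 2) * M (q τ) * c ^ 2 - ψ (q τ))
        ((1/2) * (2 * vel q 3 s * acc q 3 s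
            - ∑ p : Fin 3, 2 * vel q p.castSucc s * acc q p.castSucc s)
          - fderiv ℝ ψ (q s) (fun σ => vel q σ s)) s := by
      rw [hfun]
      exact ((h3sq.sub hsum).const_mul (1/2)).sub hψq
    rw [hD.deriv, hLw]
    -- Now pure algebra.  Clear denominators in the Chetaev equations.
    have e : ∀ l : Fin 3,
        r * (-acc q l.castSucc s
          + (∑ σ, vel q σ s * (pd (φ σ) l.castSucc (q s) - pd (φ l.castSucc) σ (q s)))
          - pd ψ l.castSucc (q s)) = -(lam s * vel q l.castSucc s) := by
      intro l
      rw [hchet1 s l, ← hrdef]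
      field_simp
    have e0 := e 0
    have e1 := e 1
    have e2 := e 2
    have e4 := hchet2 s
    have hv3 : vel q 3 s = r := hcon s
    have c0 : ((0:Fin 3).castSucc) = (0:Fin 4) := rfl
    have c1 : ((1:Fin 3).castSucc) = (1:Fin 4) := rfl
    have c2 : ((2:Fin 3).castSucc) = (2:Fin 4) := rfl
    simp only [Fin.sum_univ_four, Fin.sum_univ_three, c0, c1, c2, hv3] at e0 e1 e2 e4 hr2 ⊢
    rw [eq_div_iff hr.ne']
    linear_combination vel q 0 s * e0 + vel q 1 s * e1 + vel q 2 s * e2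
      + r ^ 2 * e4 + lam s * hr2
  refine ⟨key, fun hMne s => ?_⟩
  rw [key s]
  have hsq : Real.sqrt (M (q s) * c ^ 2 + ∑ p : Fin 3, vel q p.castSucc s ^ 2) ≠ 0 :=
    (Real.sqrt_pos.2 (hpos s)).ne'
  have hMc : M (q s) * c ^ 2 ≠ 0 := mul_ne_zero (hMne s) (by positivity)
  field_simp
  exact (mul_div_cancel_right₀ (lam s) (hMne s)).symm
end

section
/- Let c > 0, e ∈ ℝ, m₀ > 0, let A : ℝ × ℝ³ → ℝ³ and V, ψ : ℝ × ℝ³ → ℝ be C¹ fields, and set φ_l(t,x) = (e/c)A^l(t,x) for l = 1,2,3 and φ_4(t,x) = −(e/c)V(t,x). Let r : ℝ → ℝ³ be a twice differentiable curve with |dr/dt| < c everywhere, write v = dr/dt and γ(t) = 1/√(1 − |v(t)|²/c²), and let t : ℝ → ℝ be a twice differentiable function satisfying the mass equation dt/ds = m₀γ(t(s)). Define the curve q : ℝ → ℝ⁴ by q(s) = (r(t(s)), c·t(s)). Then q automatically satisfies the constraint q̇⁴(s) = √(m₀²c² + Σ_{p=1}^{3}(q̇^p(s))²), and q satisfies,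 for all s and j = 1,2,3, the reduced equations q̈^j = Σ_l q̇^l(∂φ_l/∂q^j − ∂φ_j/∂q^l) + √(m₀²c² + Σ_p(q̇^p)²)(∂φ_4/∂q^j − ∂φ_j/∂q⁴) − ∂ψ/∂q^j − (q̇^j/(m₀²c²))(Σ_l q̇^l ∂ψ/∂q^l + √(m₀²c² + Σ_p(q̇^p)²)·∂ψ/∂q⁴) if and only if r satisfies, for all t in the range of t(s), the three-dimensional equations of motion (d/dt)(m₀ γ v) = F_L + F_C − (1/m₀)√(1 − v²/c²)·grad ψ, where F_L(t) = e((1/c) v × curl A − (1/c)∂A/∂t − grad V) evaluated at (t, r(t)), grad denotes the spatial gradient, and F_C(t) = −(1/(m₀c²)) γ v (dψ/dt) with dψ/dt = ⟨v, grad ψ⟩ + ∂ψ/∂t evaluated along the curve. -/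
/-- Spatial partial derivative `∂f/∂x^i` of a field on `ℝ × ℝ³`. -/
noncomputable def pdx (f : ℝ × (Fin 3 → ℝ) → ℝ) (i : Fin 3) (t : ℝ) (x : Fin 3 → ℝ) : ℝ :=
  fderiv ℝ (fun y => f (t, y)) x (Pi.single i 1)

/-- Time partial derivative `∂f/∂t` of a field on `ℝ × ℝ³`. -/
noncomputable def pdt (f : ℝ × (Fin 3 → ℝ) → ℝ) (t : ℝ) (x : Fin 3 → ℝ) : ℝ :=
  deriv (fun τ => f (τ, x)) t

/-- Cross product on `ℝ³`. -/
def cross (u v : Fin 3 → ℝ) : Fin 3 → ℝ :=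
  ![u 1 * v 2 - u 2 * v 1, u 2 * v 0 - u 0 * v 2, u 0 * v 1 - u 1 * v 0]

/-- Curl of a time-dependent vector field on `ℝ³`. -/
noncomputable def curl (A : Fin 3 → ℝ × (Fin 3 → ℝ) → ℝ) (t : ℝ) (x : Fin 3 → ℝ) :
    Fin 3 → ℝ :=
  ![pdx (A 2) 1 t x - pdx (A 1) 2 t x,
    pdx (A 0) 2 t x - pdx (A 2) 0 t x,
    pdx (A 1) 0 t x - pdx (A 0) 1 t x]

/-- Component `l` of the velocity of a curve in `ℝ³`. -/
noncomputable def v3 (r : ℝ → Fin 3 → ℝ) (l : Fin 3) (t : ℝ) : ℝ :=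
  deriv (fun τ => r τ l) t

/-- `v × curl A` expressed as a sum. -/
lemma cross_curl_eq (A : Fin 3 → ℝ × (Fin 3 → ℝ) → ℝ) (t : ℝ) (x v : Fin 3 → ℝ) (j : Fin 3) :
    cross v (curl A t x) j = ∑ l, v l * (pdx (A l) j t x - pdx (A j) l t x) := by
  fin_cases j <;> simp [cross, curl, Fin.sum_univ_three] <;> ring

set_option maxHeartbeats 2000000 in
/-- for a particle with positive square of mass `m₀² > 0`, under the
mass equation `dt/ds = m₀γ`, the curve `q(s) = (r(t(s)), c·t(s))` automatically
satisfies the constraint, and the reduced (four-dimensional) equations of motion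
hold iff the three-dimensional equations
`(d/dt)(m₀γv) = F_L + F_C − (1/m₀)√(1−v²/c²)·grad ψ` hold. -/
theorem stmt6 (c e m₀ : ℝ) (hc : 0 < c) (hm : 0 < m₀)
    (A : Fin 3 → ℝ × (Fin 3 → ℝ) → ℝ) (V ψ : ℝ × (Fin 3 → ℝ) → ℝ)
    (hA : ∀ l, ContDiff ℝ 1 (A l)) (hV : ContDiff ℝ 1 V) (hψ : ContDiff ℝ 1 ψ)
    (φ : Fin 4 → ℝ × (Fin 3 → ℝ) → ℝ)
    (hφl : ∀ l : Fin 3, ∀ p, φ l.castSucc p = e / c * A l p)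
    (hφ4 : ∀ p, φ 3 p = -(e / c) * V p)
    (r : ℝ → Fin 3 → ℝ)
    (hr1 : ∀ l, Differentiable ℝ fun t => r t l)
    (hr2 : ∀ l, Differentiable ℝ (v3 r l))
    (hsub : ∀ t, Real.sqrt (∑ p, v3 r p t ^ 2) < c)
    (T : ℝ → ℝ) (hT1 : Differentiable ℝ T) (hT2 : Differentiable ℝ (deriv T))
    (hmass : ∀ s, deriv T s =
      m₀ / Real.sqrt (1 - (∑ p, v3 r p (T s) ^ 2) / c ^ 2))
    (q : ℝ → Fin 4 → ℝ)
    (hq : ∀ s, q s = Fin.snoc (r (T s)) (c * T s)) :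
    (∀ s, vel q 3 s =
        Real.sqrt (m₀ ^ 2 * c ^ 2 + ∑ p : Fin 3, vel q p.castSucc s ^ 2)) ∧
    ((∀ s, ∀ j : Fin 3,
        acc q j.castSucc s =
          (∑ l : Fin 3, vel q l.castSucc s *
              (pdx (φ l.castSucc) j (T s) (r (T s))
                - pdx (φ j.castSucc) l (T s) (r (T s))))
            + Real.sqrt (m₀ ^ 2 * c ^ 2 + ∑ p : Fin 3, vel q p.castSucc s ^ 2) *
                (pdx (φ 3) j (T s) (r (T s))
                  - (1 / c) * pdt (φ j.castSucc) (T s) (r (T s)))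
            - pdx ψ j (T s) (r (T s))
            - vel q j.castSucc s / (m₀ ^ 2 * c ^ 2) *
                ((∑ l : Fin 3, vel q l.castSucc s * pdx ψ l (T s) (r (T s)))
                  + Real.sqrt (m₀ ^ 2 * c ^ 2 + ∑ p : Fin 3, vel q p.castSucc s ^ 2) *
                      ((1 / c) * pdt ψ (T s) (r (T s)))))
      ↔
      (∀ t ∈ Set.range T, ∀ l : Fin 3,
        deriv (fun τ => m₀ * v3 r l τ /
            Real.sqrt (1 - (∑ p, v3 r p τ ^ 2) / c ^ 2)) t =
          e * ((1 / c) * cross (fun i => v3 r i t) (curl A t (r t)) l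
              - (1 / c) * pdt (A l) t (r t) - pdx V l t (r t))
          + (-(1 / (m₀ * c ^ 2)) *
              (1 / Real.sqrt (1 - (∑ p, v3 r p t ^ 2) / c ^ 2)) * v3 r l t *
              ((∑ p, v3 r p t * pdx ψ p t (r t)) + pdt ψ t (r t)))
          - (1 / m₀) * Real.sqrt (1 - (∑ p, v3 r p t ^ 2) / c ^ 2) *
              pdx ψ l t (r t))) := by
  have hc' : c ≠ 0 := ne_of_gt hc
  have hm' : m₀ ≠ 0 := ne_of_gt hm
  have hA' : ∀ l, Differentiable ℝ (A l) := fun l => (hA l).differentiable one_ne_zero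
  have harg : ∀ t, 0 < 1 - (∑ p, v3 r p t ^ 2) / c ^ 2 := by
    intro t
    have hnn : (0:ℝ) ≤ ∑ p, v3 r p t ^ 2 := Finset.sum_nonneg fun p _ => sq_nonneg _
    have hlt : (∑ p, v3 r p t ^ 2) < c ^ 2 := by
      calc (∑ p, v3 r p t ^ 2) = Real.sqrt (∑ p, v3 r p t ^ 2) ^ 2 :=
            (Real.sq_sqrt hnn).symm
        _ < c ^ 2 := by
            have h1 := hsub t
            have h0 := Real.sqrt_nonneg (∑ p, v3 r p t ^ 2)
            nlinarith
    rw [sub_pos, div_lt_one (by positivity)]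
    exact hlt
  have hgpos : ∀ t, 0 < Real.sqrt (1 - (∑ p, v3 r p t ^ 2) / c ^ 2) :=
    fun t => Real.sqrt_pos.mpr (harg t)
  have hgne : ∀ t, Real.sqrt (1 - (∑ p, v3 r p t ^ 2) / c ^ 2) ≠ 0 :=
    fun t => ne_of_gt (hgpos t)
  have hgsq : ∀ t, Real.sqrt (1 - (∑ p, v3 r p t ^ 2) / c ^ 2) ^ 2
      = 1 - (∑ p, v3 r p t ^ 2) / c ^ 2 := fun t => Real.sq_sqrt (le_of_lt (harg t))
  have hgdiff : ∀ t, DifferentiableAt ℝ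
      (fun τ => Real.sqrt (1 - (∑ p, v3 r p τ ^ 2) / c ^ 2)) t := by
    intro t
    have hinner : DifferentiableAt ℝ (fun τ => 1 - (∑ p, v3 r p τ ^ 2) / c ^ 2) t := by
      apply DifferentiableAt.const_sub
      apply DifferentiableAt.div_const
      exact DifferentiableAt.fun_sum fun p _ => ((hr2 p) t).pow 2
    exact (Real.hasDerivAt_sqrt (ne_of_gt (harg t))).differentiableAt.comp t hinner
  have hmomdiff : ∀ (j : Fin 3) t, DifferentiableAt ℝ
      (fun τ => m₀ * v3 r j τ / Real.sqrt (1 - (∑ p, v3 r p τ ^ 2) / c ^ 2)) t :=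
    fun j t => (((hr2 j) t).const_mul m₀).div (hgdiff t) (hgne t)
  -- velocity components of q
  have hvel : ∀ s (l : Fin 3), vel q l.castSucc s
      = m₀ * v3 r l (T s) / Real.sqrt (1 - (∑ p, v3 r p (T s) ^ 2) / c ^ 2) := by
    intro s l
    have h1 : (fun τ => q τ l.castSucc) = (fun τ => r τ l) ∘ T := by
      funext τ; rw [hq τ]; exact Fin.snoc_castSucc _ _ _
    show deriv (fun τ => q τ l.castSucc) s = _
    rw [h1, deriv_comp s ((hr1 l) (T s)) (hT1 s), hmass s,
      show deriv (fun τ => r τ l) (T s) = v3 r l (T s) from rfl]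
    ring
  have hvel3 : ∀ s, vel q 3 s
      = m₀ * c / Real.sqrt (1 - (∑ p, v3 r p (T s) ^ 2) / c ^ 2) := by
    intro s
    have h1 : (fun τ => q τ (3 : Fin 4)) = fun τ => c * T τ := by
      funext τ; rw [hq τ]; exact Fin.snoc_last _ _
    show deriv (fun τ => q τ (3 : Fin 4)) s = _
    rw [h1, deriv_const_mul c (hT1 s), hmass s]
    ring
  have hsqrt : ∀ s, Real.sqrt (m₀ ^ 2 * c ^ 2 + ∑ p : Fin 3,
        (m₀ * v3 r p (T s) / Real.sqrt (1 - (∑ p', v3 r p' (T s) ^ 2) / c ^ 2)) ^ 2)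
      = m₀ * c / Real.sqrt (1 - (∑ p, v3 r p (T s) ^ 2) / c ^ 2) := by
    intro s
    have hsum : ∑ p : Fin 3,
        (m₀ * v3 r p (T s) / Real.sqrt (1 - (∑ p', v3 r p' (T s) ^ 2) / c ^ 2)) ^ 2
        = m₀ ^ 2 * (∑ p, v3 r p (T s) ^ 2)
            / Real.sqrt (1 - (∑ p, v3 r p (T s) ^ 2) / c ^ 2) ^ 2 := by
      simp only [mul_pow, div_pow, ← Finset.sum_div, ← Finset.mul_sum]
    have key : m₀ ^ 2 * c ^ 2 + ∑ p : Fin 3,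
        (m₀ * v3 r p (T s) / Real.sqrt (1 - (∑ p', v3 r p' (T s) ^ 2) / c ^ 2)) ^ 2
        = (m₀ * c / Real.sqrt (1 - (∑ p, v3 r p (T s) ^ 2) / c ^ 2)) ^ 2 := by
      rw [hsum]
      set g := Real.sqrt (1 - (∑ p, v3 r p (T s) ^ 2) / c ^ 2) with hgdef
      have h2 : g ^ 2 = 1 - (∑ p, v3 r p (T s) ^ 2) / c ^ 2 := hgsq (T s)
      have h3 : g ≠ 0 := hgne (T s)
      have h4 : g ^ 2 * c ^ 2 = c ^ 2 - ∑ p, v3 r p (T s) ^ 2 := by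
        rw [h2]; field_simp
      field_simp
      linear_combination h4
    rw [key, Real.sqrt_sq (by positivity)]
  -- constraint
  have part1 : ∀ s, vel q 3 s
      = Real.sqrt (m₀ ^ 2 * c ^ 2 + ∑ p : Fin 3, vel q p.castSucc s ^ 2) := by
    intro s
    simp only [hvel]
    rw [hvel3 s, hsqrt s]
  -- acceleration via chain rule
  have hacc : ∀ s (j : Fin 3), acc q j.castSucc s
      = m₀ / Real.sqrt (1 - (∑ p, v3 r p (T s) ^ 2) / c ^ 2) *
        deriv (fun τ => m₀ * v3 r j τ /
          Real.sqrt (1 - (∑ p, v3 r p τ ^ 2) / c ^ 2)) (T s) := by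
    intro s j
    have hcomp : vel q j.castSucc = (fun τ => m₀ * v3 r j τ /
        Real.sqrt (1 - (∑ p, v3 r p τ ^ 2) / c ^ 2)) ∘ T :=
      funext fun s => hvel s j
    show deriv (vel q j.castSucc) s = _
    rw [hcomp, deriv_comp s (hmomdiff j (T s)) (hT1 s), hmass s]
    ring
  -- partial derivatives of φ
  have hpdxA : ∀ (l : Fin 3) t x, DifferentiableAt ℝ (fun y => A l (t, y)) x :=
    fun l t x => ((hA' l) (t, x)).comp x ((differentiableAt_const t).prodMk differentiableAt_id)
  have hpdtA : ∀ (l : Fin 3) t x, DifferentiableAt ℝ (fun τ => A l (τ, x)) t :=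
    fun l t x => ((hA' l) (t, x)).comp t (differentiableAt_id.prodMk (differentiableAt_const x))
  have hVx : ∀ t x, DifferentiableAt ℝ (fun y => V (t, y)) x :=
    fun t x => ((hV.differentiable one_ne_zero) (t, x)).comp x
      ((differentiableAt_const t).prodMk differentiableAt_id)
  have hpdxφ : ∀ (l j : Fin 3) t x, pdx (φ l.castSucc) j t x = e / c * pdx (A l) j t x := by
    intro l j t x
    have hfun : (fun y => φ l.castSucc (t, y)) = fun y => e / c * A l (t, y) :=
      funext fun y => hφl l (t, y)
    show fderiv ℝ (fun y => φ l.castSucc (t, y)) x (Pi.single j 1) = _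
    rw [hfun, fderiv_const_mul (hpdxA l t x)]
    simp [pdx]
  have hpdxφ4 : ∀ (j : Fin 3) t x, pdx (φ 3) j t x = -(e / c) * pdx V j t x := by
    intro j t x
    have hfun : (fun y => φ 3 (t, y)) = fun y => -(e / c) * V (t, y) :=
      funext fun y => hφ4 (t, y)
    show fderiv ℝ (fun y => φ 3 (t, y)) x (Pi.single j 1) = _
    rw [hfun, fderiv_const_mul (hVx t x)]
    simp [pdx]
  have hpdtφ : ∀ (l : Fin 3) t x, pdt (φ l.castSucc) t x = e / c * pdt (A l) t x := by
    intro l t x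
    have hfun : (fun τ => φ l.castSucc (τ, x)) = fun τ => e / c * A l (τ, x) :=
      funext fun τ => hφl l (τ, x)
    show deriv (fun τ => φ l.castSucc (τ, x)) t = _
    rw [hfun, deriv_const_mul _ (hpdtA l t x)]
    rfl
  -- the right-hand sides are proportional
  have hR : ∀ s (j : Fin 3),
      (∑ l : Fin 3, vel q l.castSucc s *
          (pdx (φ l.castSucc) j (T s) (r (T s))
            - pdx (φ j.castSucc) l (T s) (r (T s))))
        + Real.sqrt (m₀ ^ 2 * c ^ 2 + ∑ p : Fin 3, vel q p.castSucc s ^ 2) *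
            (pdx (φ 3) j (T s) (r (T s))
              - (1 / c) * pdt (φ j.castSucc) (T s) (r (T s)))
        - pdx ψ j (T s) (r (T s))
        - vel q j.castSucc s / (m₀ ^ 2 * c ^ 2) *
            ((∑ l : Fin 3, vel q l.castSucc s * pdx ψ l (T s) (r (T s)))
              + Real.sqrt (m₀ ^ 2 * c ^ 2 + ∑ p : Fin 3, vel q p.castSucc s ^ 2) *
                  ((1 / c) * pdt ψ (T s) (r (T s))))
      = m₀ / Real.sqrt (1 - (∑ p, v3 r p (T s) ^ 2) / c ^ 2) *
          (e * ((1 / c) * cross (fun i => v3 r i (T s)) (curl A (T s) (r (T s))) j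
              - (1 / c) * pdt (A j) (T s) (r (T s)) - pdx V j (T s) (r (T s)))
          + (-(1 / (m₀ * c ^ 2)) *
              (1 / Real.sqrt (1 - (∑ p, v3 r p (T s) ^ 2) / c ^ 2)) * v3 r j (T s) *
              ((∑ p, v3 r p (T s) * pdx ψ p (T s) (r (T s))) + pdt ψ (T s) (r (T s))))
          - (1 / m₀) * Real.sqrt (1 - (∑ p, v3 r p (T s) ^ 2) / c ^ 2) *
              pdx ψ j (T s) (r (T s))) := by
    intro s j
    simp only [hvel, hsqrt]
    simp only [hpdxφ, hpdxφ4, hpdtφ, cross_curl_eq]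
    set g := Real.sqrt (1 - (∑ p, v3 r p (T s) ^ 2) / c ^ 2) with hgdef
    have h3 : g ≠ 0 := hgne (T s)
    simp only [Fin.sum_univ_three]
    field_simp
    ring
  have hk : ∀ s, m₀ / Real.sqrt (1 - (∑ p, v3 r p (T s) ^ 2) / c ^ 2) ≠ 0 :=
    fun s => div_ne_zero hm' (hgne (T s))
  refine ⟨part1, ?_, ?_⟩
  · intro h t ht j
    obtain ⟨s, rfl⟩ := ht
    have h4 := h s j
    rw [hacc s j, hR s j] at h4
    exact mul_left_cancel₀ (hk s) h4
  · intro h s j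
    rw [hacc s j, hR s j, h (T s) ⟨s, rfl⟩ j]
end

section
/- Let c > 0, e ∈ ℝ, m₀ > 0, let A : ℝ × ℝ³ → ℝ³ and V, ψ : ℝ × ℝ³ → ℝ be C¹ fields, and set φ_l(t,x) = (e/c)A^l(t,x) for l = 1,2,3 and φ_4(t,x) = −(e/c)V(t,x). Let r : ℝ → ℝ³ be a twice differentiable curve with |dr/dt| > c everywhere, write v = dr/dt and Γ(t) = 1/√(|v(t)|²/c² − 1), and let t : ℝ → ℝ be a twice differentiable function satisfying dt/ds = m₀ Γ(t(s)). Define q : ℝ → ℝ⁴ by q(s) = (r(t(s)), c·t(s)). Then q satisfies the constraint q̇⁴(s) = √(−m₀²c² + Σ_{p=1}^{3}(q̇^p(s))²), and q satisfies, for all s and j = 1,2,3, the reduced equations q̈^j = Σ_l q̇^l(∂φ_l/∂q^j − ∂φ_j/∂q^l) + √(−m₀²c² + Σ_p(q̇^p)²)(∂φ_4/∂q^j − ∂φ_j/∂q⁴) − ∂ψ/∂q^j + (q̇^j/(m₀²c²))(Σ_l q̇^l ∂ψ/∂q^l + √(−m₀²c² + Σ_p(q̇^p)²)·∂ψ/∂q⁴)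 if and only if r satisfies, for all t in the range of t(s), the tachyon equations of motion (d/dt)(m₀ Γ v) = F_L + F_C − (1/m₀)√(v²/c² − 1)·grad ψ, where F_L(t) = e((1/c) v × curl A − (1/c)∂A/∂t − grad V) evaluated at (t, r(t)), grad denotes the spatial gradient, and F_C(t) = (1/(m₀c²)) Γ v (dψ/dt) with dψ/dt = ⟨v, grad ψ⟩ + ∂ψ/∂t evaluated along the curve. -/
set_option maxHeartbeats 2000000 in
/-- for a tachyon (negative square of mass `−m₀²`), under the
equation `dt/ds = m₀Γ` with `Γ = 1/√(v²/c²−1)`, the curve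
`q(s) = (r(t(s)), c·t(s))` satisfies the constraint, and the reduced
(four-dimensional) equations of motion hold iff the tachyon equations
`(d/dt)(m₀Γv) = F_L + F_C − (1/m₀)√(v²/c²−1)·grad ψ` hold. -/
theorem stmt7 (c e m₀ : ℝ) (hc : 0 < c) (hm : 0 < m₀)
    (A : Fin 3 → ℝ × (Fin 3 → ℝ) → ℝ) (V ψ : ℝ × (Fin 3 → ℝ) → ℝ)
    (hA : ∀ l, ContDiff ℝ 1 (A l)) (hV : ContDiff ℝ 1 V) (hψ : ContDiff ℝ 1 ψ)
    (φ : Fin 4 → ℝ × (Fin 3 → ℝ) → ℝ)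
    (hφl : ∀ l : Fin 3, ∀ p, φ l.castSucc p = e / c * A l p)
    (hφ4 : ∀ p, φ 3 p = -(e / c) * V p)
    (r : ℝ → Fin 3 → ℝ)
    (hr1 : ∀ l, Differentiable ℝ fun t => r t l)
    (hr2 : ∀ l, Differentiable ℝ (v3 r l))
    (hsup : ∀ t, c < Real.sqrt (∑ p, v3 r p t ^ 2))
    (T : ℝ → ℝ) (hT1 : Differentiable ℝ T) (hT2 : Differentiable ℝ (deriv T))
    (hmass : ∀ s, deriv T s =
      m₀ / Real.sqrt ((∑ p, v3 r p (T s) ^ 2) / c ^ 2 - 1))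
    (q : ℝ → Fin 4 → ℝ)
    (hq : ∀ s, q s = Fin.snoc (r (T s)) (c * T s)) :
    (∀ s, vel q 3 s =
        Real.sqrt (-(m₀ ^ 2 * c ^ 2) + ∑ p : Fin 3, vel q p.castSucc s ^ 2)) ∧
    ((∀ s, ∀ j : Fin 3,
        acc q j.castSucc s =
          (∑ l : Fin 3, vel q l.castSucc s *
              (pdx (φ l.castSucc) j (T s) (r (T s))
                - pdx (φ j.castSucc) l (T s) (r (T s))))
            + Real.sqrt (-(m₀ ^ 2 * c ^ 2) + ∑ p : Fin 3, vel q p.castSucc s ^ 2) *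
                (pdx (φ 3) j (T s) (r (T s))
                  - (1 / c) * pdt (φ j.castSucc) (T s) (r (T s)))
            - pdx ψ j (T s) (r (T s))
            + vel q j.castSucc s / (m₀ ^ 2 * c ^ 2) *
                ((∑ l : Fin 3, vel q l.castSucc s * pdx ψ l (T s) (r (T s)))
                  + Real.sqrt (-(m₀ ^ 2 * c ^ 2) + ∑ p : Fin 3, vel q p.castSucc s ^ 2) *
                      ((1 / c) * pdt ψ (T s) (r (T s)))))
      ↔
      (∀ t ∈ Set.range T, ∀ l : Fin 3,
        deriv (fun τ => m₀ * v3 r l τ /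
            Real.sqrt ((∑ p, v3 r p τ ^ 2) / c ^ 2 - 1)) t =
          e * ((1 / c) * cross (fun i => v3 r i t) (curl A t (r t)) l
              - (1 / c) * pdt (A l) t (r t) - pdx V l t (r t))
          + ((1 / (m₀ * c ^ 2)) *
              (1 / Real.sqrt ((∑ p, v3 r p t ^ 2) / c ^ 2 - 1)) * v3 r l t *
              ((∑ p, v3 r p t * pdx ψ p t (r t)) + pdt ψ t (r t)))
          - (1 / m₀) * Real.sqrt ((∑ p, v3 r p t ^ 2) / c ^ 2 - 1) *
              pdx ψ l t (r t))) := by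

  have hc0 : c ≠ 0 := hc.ne'
  have hm0 : m₀ ≠ 0 := hm.ne'
  set S : ℝ → ℝ := fun t => ∑ p, v3 r p t ^ 2 with hSdef
  have hSpos : ∀ t, c ^ 2 < S t := by
    intro t
    have := hsup t
    exact (Real.lt_sqrt hc.le).1 this
  have hSdiff : Differentiable ℝ S := by
    apply Differentiable.fun_sum
    intro p _
    exact (hr2 p).pow 2
  have hhpos : ∀ t, 0 < S t / c ^ 2 - 1 := by
    intro t
    have h1 : (0:ℝ) < c ^ 2 := by positivity
    have := hSpos t
    rw [sub_pos, lt_div_iff₀ h1, one_mul]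
    exact this
  set g : ℝ → ℝ := fun t => Real.sqrt (S t / c ^ 2 - 1) with hgdef
  have hgpos : ∀ t, 0 < g t := fun t => Real.sqrt_pos.2 (hhpos t)
  have hgsq : ∀ t, g t ^ 2 = S t / c ^ 2 - 1 := fun t => Real.sq_sqrt (hhpos t).le
  have hgdiff : ∀ t, DifferentiableAt ℝ g t := by
    intro t
    exact (Real.hasDerivAt_sqrt (hhpos t).ne').differentiableAt.comp t
      ((hSdiff t).div_const _ |>.sub_const 1)
  have hT' : ∀ s, deriv T s = m₀ / g (T s) := hmass
  clear_value S
  clear_value g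
  have hT'pos : ∀ s, 0 < deriv T s := by
    intro s; rw [hT' s]; exact div_pos hm (hgpos (T s))
  -- component functions of q
  have hqp : ∀ p : Fin 3, (fun τ => q τ p.castSucc) = fun τ => r (T τ) p := by
    intro p; funext τ; rw [hq]; exact Fin.snoc_castSucc _ _ _
  have hq4 : (fun τ => q τ 3) = fun τ => c * T τ := by
    funext τ; rw [hq]
    exact Fin.snoc_last _ _
  have hvel : ∀ s (p : Fin 3), vel q p.castSucc s = v3 r p (T s) * deriv T s := by
    intro s p
    unfold vel
    rw [hqp p]
    have h := deriv_comp (h₂ := fun t => r t p) (h := T) s ((hr1 p) (T s)) (hT1 s)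
    simpa [Function.comp_def, v3] using h
  have hvel4 : ∀ s, vel q 3 s = c * deriv T s := by
    intro s
    unfold vel
    rw [hq4]
    exact deriv_const_mul c (hT1 s)
  -- constraint
  have hsum : ∀ s, (-(m₀ ^ 2 * c ^ 2) + ∑ p : Fin 3, vel q p.castSucc s ^ 2)
      = (c * deriv T s) ^ 2 := by
    intro s
    have h1 : ∀ p : Fin 3, vel q p.castSucc s ^ 2 = v3 r p (T s) ^ 2 * deriv T s ^ 2 := by
      intro p; rw [hvel]; ring
    simp_rw [h1]
    rw [← Finset.sum_mul]
    have hG := hgsq (T s)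
    have hGpos := hgpos (T s)
    rw [hT' s]
    have hSc : S (T s) = c ^ 2 * (g (T s) ^ 2 + 1) := by
      rw [hG]; field_simp; ring
    have hsum' : ∑ p : Fin 3, v3 r p (T s) ^ 2 = S (T s) := by rw [hSdef]
    rw [hsum', hSc]
    field_simp
    ring
  have hsqrt : ∀ s, Real.sqrt (-(m₀ ^ 2 * c ^ 2) + ∑ p : Fin 3, vel q p.castSucc s ^ 2)
      = c * deriv T s := by
    intro s
    rw [hsum s, Real.sqrt_sq (mul_pos hc (hT'pos s)).le]
  have hcon : ∀ s, vel q 3 s =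
      Real.sqrt (-(m₀ ^ 2 * c ^ 2) + ∑ p : Fin 3, vel q p.castSucc s ^ 2) := by
    intro s; rw [hsqrt s, hvel4 s]
  refine ⟨hcon, ?_⟩
  -- differentiability of F j
  have hF : ∀ (j : Fin 3) (t : ℝ), DifferentiableAt ℝ (fun τ => m₀ * v3 r j τ / g τ) t := by
    intro j t
    exact (((hr2 j) t).const_mul m₀).div (hgdiff t) (hgpos t).ne'
  have hacc : ∀ s (j : Fin 3),
      acc q j.castSucc s = deriv (fun τ => m₀ * v3 r j τ / g τ) (T s) * deriv T s := by
    intro s j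
    unfold acc
    have hEq : vel q j.castSucc = fun σ => (fun τ => m₀ * v3 r j τ / g τ) (T σ) := by
      funext σ
      rw [hvel σ j, hT' σ]
      ring
    rw [hEq]
    exact deriv_comp s (hF j (T s)) (hT1 s)
  -- partial derivative linearity
  have hdiffA : ∀ (l : Fin 3) (t : ℝ) (x : Fin 3 → ℝ),
      DifferentiableAt ℝ (fun y => A l (t, y)) x := by
    intro l t x
    exact ((hA l).differentiable one_ne_zero).comp
      (((differentiable_const t).prodMk differentiable_id) ) x
  have hdiffAt : ∀ (l : Fin 3) (t : ℝ) (x : Fin 3 → ℝ),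
      DifferentiableAt ℝ (fun τ => A l (τ, x)) t := by
    intro l t x
    exact ((hA l).differentiable one_ne_zero).comp
      ((differentiable_id.prodMk (differentiable_const x))) t
  have hdiffV : ∀ (t : ℝ) (x : Fin 3 → ℝ), DifferentiableAt ℝ (fun y => V (t, y)) x := by
    intro t x
    exact (hV.differentiable one_ne_zero).comp
      (((differentiable_const t).prodMk differentiable_id)) x
  have hpdxA : ∀ (l i : Fin 3) (t : ℝ) (x : Fin 3 → ℝ),
      pdx (φ l.castSucc) i t x = e / c * pdx (A l) i t x := by
    intro l i t x
    have hφ : φ l.castSucc = fun p => e / c * A l p := funext (hφl l)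
    rw [hφ]
    unfold pdx
    rw [show (fun y => e / c * A l (t, y)) = fun y => e / c * (fun y => A l (t, y)) y from rfl,
      fderiv_const_mul (hdiffA l t x)]
    simp
  have hpdtA : ∀ (l : Fin 3) (t : ℝ) (x : Fin 3 → ℝ),
      pdt (φ l.castSucc) t x = e / c * pdt (A l) t x := by
    intro l t x
    have hφ : φ l.castSucc = fun p => e / c * A l p := funext (hφl l)
    rw [hφ]
    unfold pdt
    exact deriv_const_mul _ (hdiffAt l t x)
  have hpdxV : ∀ (i : Fin 3) (t : ℝ) (x : Fin 3 → ℝ),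
      pdx (φ 3) i t x = -(e / c) * pdx V i t x := by
    intro i t x
    have hφ : φ 3 = fun p => -(e / c) * V p := funext hφ4
    rw [hφ]
    unfold pdx
    rw [show (fun y => -(e / c) * V (t, y)) = fun y => -(e / c) * (fun y => V (t, y)) y from rfl,
      fderiv_const_mul (hdiffV t x)]
    simp
  -- key pointwise equivalence
  have halg : ∀ s (j : Fin 3),
      ((∑ l : Fin 3, v3 r l (T s) * (m₀ / g (T s)) *
              (e / c * pdx (A l) j (T s) (r (T s)) - e / c * pdx (A j) l (T s) (r (T s))))
            + c * (m₀ / g (T s)) *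
                (-(e / c) * pdx V j (T s) (r (T s))
                  - 1 / c * (e / c * pdt (A j) (T s) (r (T s))))
            - pdx ψ j (T s) (r (T s))
            + v3 r j (T s) * (m₀ / g (T s)) / (m₀ ^ 2 * c ^ 2) *
                ((∑ l : Fin 3, v3 r l (T s) * (m₀ / g (T s)) * pdx ψ l (T s) (r (T s)))
                  + c * (m₀ / g (T s)) * (1 / c * pdt ψ (T s) (r (T s)))))
      = m₀ / g (T s) *
          (e * (1 / c * cross (fun i => v3 r i (T s)) (curl A (T s) (r (T s))) j
              - 1 / c * pdt (A j) (T s) (r (T s)) - pdx V j (T s) (r (T s)))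
          + 1 / (m₀ * c ^ 2) * (1 / g (T s)) * v3 r j (T s) *
              ((∑ p, v3 r p (T s) * pdx ψ p (T s) (r (T s))) + pdt ψ (T s) (r (T s)))
          - 1 / m₀ * g (T s) * pdx ψ j (T s) (r (T s))) := by
    intro s j
    have hGne : g (T s) ≠ 0 := (hgpos (T s)).ne'
    fin_cases j <;>
      · simp only [cross, curl, Fin.sum_univ_three, Matrix.cons_val_zero, Matrix.cons_val_one,
          Matrix.head_cons, Matrix.cons_val_two, Matrix.tail_cons, Fin.isValue,
          show ((⟨0, by omega⟩ : Fin 3) = 0) from rfl, show ((⟨1, by omega⟩ : Fin 3) = 1) from rfl,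
          show ((⟨2, by omega⟩ : Fin 3) = 2) from rfl]
        field_simp
        ring
  have key : ∀ s (j : Fin 3),
      (acc q j.castSucc s =
          (∑ l : Fin 3, vel q l.castSucc s *
              (pdx (φ l.castSucc) j (T s) (r (T s))
                - pdx (φ j.castSucc) l (T s) (r (T s))))
            + Real.sqrt (-(m₀ ^ 2 * c ^ 2) + ∑ p : Fin 3, vel q p.castSucc s ^ 2) *
                (pdx (φ 3) j (T s) (r (T s))
                  - (1 / c) * pdt (φ j.castSucc) (T s) (r (T s)))
            - pdx ψ j (T s) (r (T s))
            + vel q j.castSucc s / (m₀ ^ 2 * c ^ 2) *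
                ((∑ l : Fin 3, vel q l.castSucc s * pdx ψ l (T s) (r (T s)))
                  + Real.sqrt (-(m₀ ^ 2 * c ^ 2) + ∑ p : Fin 3, vel q p.castSucc s ^ 2) *
                      ((1 / c) * pdt ψ (T s) (r (T s)))))
      ↔ (deriv (fun τ => m₀ * v3 r j τ / g τ) (T s) =
          e * ((1 / c) * cross (fun i => v3 r i (T s)) (curl A (T s) (r (T s))) j
              - (1 / c) * pdt (A j) (T s) (r (T s)) - pdx V j (T s) (r (T s)))
          + ((1 / (m₀ * c ^ 2)) * (1 / g (T s)) * v3 r j (T s) *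
              ((∑ p, v3 r p (T s) * pdx ψ p (T s) (r (T s))) + pdt ψ (T s) (r (T s))))
          - (1 / m₀) * g (T s) * pdx ψ j (T s) (r (T s))) := by
    intro s j
    rw [hacc s j, hsqrt s]
    simp_rw [hvel s, hpdxA, hpdtA, hpdxV, hT' s]
    rw [halg s j, mul_comm (deriv (fun τ => m₀ * v3 r j τ / g τ) (T s)) (m₀ / g (T s))]
    exact mul_right_inj' (by rw [← hT' s]; exact (hT'pos s).ne')
  have hgapp : ∀ t, Real.sqrt ((∑ p, v3 r p t ^ 2) / c ^ 2 - 1) = g t := by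
    intro t; rw [hgdef, hSdef]
  constructor
  · rintro H t ⟨s, rfl⟩ j
    simp only [hgapp]
    exact (key s j).1 (H s j)
  · intro H s j
    have h := H (T s) ⟨s, rfl⟩ j
    simp only [hgapp] at h
    exact (key s j).2 h
end

section
/- Let c > 0, e ∈ ℝ, m₀ > 0, and let A : ℝ × ℝ³ → ℝ³ and V : ℝ × ℝ³ → ℝ be C¹ fields. Define the Lagrange function ℒ(t, x, v) = m₀c²√(|v|²/c² − 1) + (e/c)⟨A(t,x), v⟩ − eV(t,x) on the region |v| > c. Then a twice differentiable curve r : ℝ → ℝ³ with |dr/dt| > c everywhere satisfies the Euler–Lagrange equations ∂ℒ/∂x^l(t, r(t), r'(t)) − (d/dt)[∂ℒ/∂v^l(t, r(t), r'(t))] = 0 for l = 1,2,3 if and only if it satisfies (d/dt)(m₀ r'(t)/√(|r'(t)|²/c² − 1)) = e((1/c) r'(t) × (curl A)(t,r(t)) − (1/c)(∂A/∂t)(t,r(t)) − (grad V)(t,r(t))) for all t. -/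
/-- Partial derivative of `ℒ(t,x,v)` in the `l`-th position slot. -/
noncomputable def pdX (L : ℝ → (Fin 3 → ℝ) → (Fin 3 → ℝ) → ℝ) (l : Fin 3)
    (t : ℝ) (x v : Fin 3 → ℝ) : ℝ :=
  fderiv ℝ (fun y => L t y v) x (Pi.single l 1)

/-- Partial derivative of `ℒ(t,x,v)` in the `l`-th velocity slot. -/
noncomputable def pdV (L : ℝ → (Fin 3 → ℝ) → (Fin 3 → ℝ) → ℝ) (l : Fin 3)
    (t : ℝ) (x v : Fin 3 → ℝ) : ℝ :=
  fderiv ℝ (fun w => L t x w) v (Pi.single l 1)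

open ContinuousLinearMap in
lemma sumsq_fderiv (v : Fin 3 → ℝ) : HasFDerivAt (fun w : Fin 3 → ℝ => ∑ i, w i ^ 2)
    (∑ i, ((2 : ℝ) * v i) • (proj i : (Fin 3 → ℝ) →L[ℝ] ℝ)) v := by
  apply HasFDerivAt.fun_sum
  intro i _
  have hp := ((proj i : (Fin 3 → ℝ) →L[ℝ] ℝ).hasFDerivAt (x := v))
  have h2 := hp.mul hp
  simp only [proj_apply] at h2
  have hd : ((2 : ℝ) * v i) • (proj i : (Fin 3 → ℝ) →L[ℝ] ℝ)
      = v i • proj i + v i • proj i := by rw [two_mul, add_smul]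
  have heq : (fun y : Fin 3 → ℝ => y i ^ 2) = fun y => y i * y i := by funext y; ring
  rw [hd, heq]
  exact h2

open ContinuousLinearMap in
lemma lin_fderiv (a v : Fin 3 → ℝ) : HasFDerivAt (fun w : Fin 3 → ℝ => ∑ i, a i * w i)
    (∑ i, (a i) • (proj i : (Fin 3 → ℝ) →L[ℝ] ℝ)) v := by
  apply HasFDerivAt.fun_sum
  intro i _
  exact ((proj i : (Fin 3 → ℝ) →L[ℝ] ℝ).hasFDerivAt (x := v)).const_mul (a i)

open ContinuousLinearMap in
lemma pdV_eq (c e m₀ : ℝ) (hc : 0 < c)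
    (A : Fin 3 → ℝ × (Fin 3 → ℝ) → ℝ) (V : ℝ × (Fin 3 → ℝ) → ℝ)
    (L : ℝ → (Fin 3 → ℝ) → (Fin 3 → ℝ) → ℝ)
    (hL : ∀ t x v, L t x v =
      m₀ * c ^ 2 * Real.sqrt ((∑ i, v i ^ 2) / c ^ 2 - 1)
        + (e / c) * (∑ i, A i (t, x) * v i) - e * V (t, x))
    (t : ℝ) (x v : Fin 3 → ℝ) (hv : c ^ 2 < ∑ i, v i ^ 2) (l : Fin 3) :
    pdV L l t x v = m₀ * v l / Real.sqrt ((∑ i, v i ^ 2) / c ^ 2 - 1)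
      + (e / c) * A l (t, x) := by
  have hy : 0 < (∑ i, v i ^ 2) / c ^ 2 - 1 := by
    rw [sub_pos, lt_div_iff₀ (by positivity)]
    simpa using hv
  have hsq : 0 < Real.sqrt ((∑ i, v i ^ 2) / c ^ 2 - 1) := Real.sqrt_pos.mpr hy
  have hg : HasFDerivAt (fun w : Fin 3 → ℝ => (∑ i, w i ^ 2) / c ^ 2 - 1)
      ((c ^ 2)⁻¹ • ∑ i, ((2 : ℝ) * v i) • (proj i : (Fin 3 → ℝ) →L[ℝ] ℝ)) v := by
    have h := ((sumsq_fderiv v).const_mul ((c ^ 2)⁻¹)).sub_const 1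
    have heq : (fun w : Fin 3 → ℝ => (∑ i, w i ^ 2) / c ^ 2 - 1)
        = fun w => (c ^ 2)⁻¹ * (∑ i, w i ^ 2) - 1 := by funext w; ring
    rw [heq]; exact h
  have hsqrt := (Real.hasDerivAt_sqrt hy.ne').comp_hasFDerivAt v hg
  have h1 := hsqrt.const_mul (m₀ * c ^ 2)
  have h2 := (lin_fderiv (fun i => A i (t, x)) v).const_mul (e / c)
  have h3 := (h1.add h2).sub_const (e * V (t, x))
  have heqL : (fun w => L t x w) = fun w : Fin 3 → ℝ =>
      m₀ * c ^ 2 * ((fun y => Real.sqrt y) ∘ fun w : Fin 3 → ℝ => (∑ i, w i ^ 2) / c ^ 2 - 1) w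
        + (e / c) * (∑ i, A i (t, x) * w i) - e * V (t, x) := by
    funext w; rw [hL]; rfl
  have hf : HasFDerivAt (fun w => L t x w)
      ((m₀ * c ^ 2) • ((1 / (2 * Real.sqrt ((∑ i, v i ^ 2) / c ^ 2 - 1))) •
          ((c ^ 2)⁻¹ • ∑ i, ((2 : ℝ) * v i) • (proj i : (Fin 3 → ℝ) →L[ℝ] ℝ)))
        + (e / c) • ∑ i, (A i (t, x)) • (proj i : (Fin 3 → ℝ) →L[ℝ] ℝ)) v := by
    rw [heqL]; exact h3
  have hkey : pdV L l t x v = _ := congrFun (congrArg _ hf.fderiv) (Pi.single l 1)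
  rw [hkey]
  simp only [add_apply, smul_apply, sum_apply, proj_apply, smul_eq_mul, Pi.single_apply,
    mul_ite, mul_one, mul_zero, Finset.sum_ite_eq', Finset.mem_univ, if_true]
  generalize hYY : Real.sqrt ((∑ i, v i ^ 2) / c ^ 2 - 1) = Y at hsq ⊢
  field_simp

lemma slice_diff (f : ℝ × (Fin 3 → ℝ) → ℝ) (hf : ContDiff ℝ 1 f) (t : ℝ) (x : Fin 3 → ℝ) :
    DifferentiableAt ℝ (fun y => f (t, y)) x :=
  (hf.differentiable one_ne_zero (t, x)).comp x ((differentiableAt_const t).prodMk differentiableAt_id)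

lemma pdX_eq (c e m₀ : ℝ)
    (A : Fin 3 → ℝ × (Fin 3 → ℝ) → ℝ) (V : ℝ × (Fin 3 → ℝ) → ℝ)
    (hA : ∀ l, ContDiff ℝ 1 (A l)) (hV : ContDiff ℝ 1 V)
    (L : ℝ → (Fin 3 → ℝ) → (Fin 3 → ℝ) → ℝ)
    (hL : ∀ t x v, L t x v =
      m₀ * c ^ 2 * Real.sqrt ((∑ i, v i ^ 2) / c ^ 2 - 1)
        + (e / c) * (∑ i, A i (t, x) * v i) - e * V (t, x))
    (t : ℝ) (x v : Fin 3 → ℝ) (l : Fin 3) :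
    pdX L l t x v = (e / c) * (∑ i, pdx (A i) l t x * v i) - e * pdx V l t x := by
  set DA : Fin 3 → (Fin 3 → ℝ) →L[ℝ] ℝ := fun i => fderiv ℝ (fun y => A i (t, y)) x with hDA
  set DV : (Fin 3 → ℝ) →L[ℝ] ℝ := fderiv ℝ (fun y => V (t, y)) x with hDV
  have hAd : ∀ i, HasFDerivAt (fun y => A i (t, y)) (DA i) x :=
    fun i => (slice_diff (A i) (hA i) t x).hasFDerivAt
  have hVd : HasFDerivAt (fun y => V (t, y)) DV x := (slice_diff V hV t x).hasFDerivAt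
  have h1 : HasFDerivAt (fun y : Fin 3 → ℝ => ∑ i, A i (t, y) * v i) (∑ i, (v i) • DA i) x :=
    HasFDerivAt.fun_sum fun i _ => (hAd i).mul_const (v i)
  have h2 := ((h1.const_mul (e / c)).sub (hVd.const_mul e)).const_add
      (m₀ * c ^ 2 * Real.sqrt ((∑ i, v i ^ 2) / c ^ 2 - 1))
  have heqL : (fun y => L t y v) = fun y : Fin 3 → ℝ =>
      m₀ * c ^ 2 * Real.sqrt ((∑ i, v i ^ 2) / c ^ 2 - 1)
        + ((e / c) * (∑ i, A i (t, y) * v i) - e * V (t, y)) := by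
    funext y; rw [hL]; ring
  have hf : HasFDerivAt (fun y => L t y v)
      ((e / c) • ∑ i, (v i) • DA i - e • DV) x := by rw [heqL]; exact h2
  have hkey : pdX L l t x v = _ := congrFun (congrArg _ hf.fderiv) (Pi.single l 1)
  rw [hkey]
  simp only [ContinuousLinearMap.sub_apply, ContinuousLinearMap.smul_apply,
    ContinuousLinearMap.sum_apply, smul_eq_mul, pdx, ← hDA, ← hDV]
  rw [Finset.mul_sum, Finset.mul_sum]
  congr 1
  exact Finset.sum_congr rfl fun i _ => by ring

lemma chain_curve (f : ℝ × (Fin 3 → ℝ) → ℝ) (hf : ContDiff ℝ 1 f)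
    (r : ℝ → Fin 3 → ℝ) (hr1 : ∀ l, Differentiable ℝ fun t => r t l) (t : ℝ) :
    HasDerivAt (fun τ => f (τ, r τ))
      (pdt f t (r t) + ∑ j, pdx f j t (r t) * v3 r j t) t := by
  set F := fderiv ℝ f (t, r t) with hF
  have hfd : HasFDerivAt f F (t, r t) := (hf.differentiable one_ne_zero (t, r t)).hasFDerivAt
  have hrd : HasDerivAt r (fun j => v3 r j t) t := by
    rw [hasDerivAt_pi]
    intro j
    exact ((hr1 j) t).hasDerivAt
  have hcurve : HasDerivAt (fun τ => (τ, r τ)) ((1 : ℝ), fun j => v3 r j t) t :=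
    (hasDerivAt_id t).prodMk hrd
  have hcomp := hfd.comp_hasDerivAt t hcurve
  have hpdt : pdt f t (r t) = F (1, 0) := by
    have hc : HasDerivAt (fun τ => ((τ, r t) : ℝ × (Fin 3 → ℝ))) ((1 : ℝ), 0) t :=
      (hasDerivAt_id t).prodMk (hasDerivAt_const t (r t))
    have h := hfd.comp_hasDerivAt t hc
    rw [pdt]
    exact h.deriv
  have hpdx : ∀ j, pdx f j t (r t) = F (0, Pi.single j 1) := by
    intro j
    have hinc : HasFDerivAt (fun y : Fin 3 → ℝ => ((t, y) : ℝ × (Fin 3 → ℝ)))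
        (ContinuousLinearMap.inr ℝ ℝ (Fin 3 → ℝ)) (r t) :=
      (hasFDerivAt_const t (r t)).prodMk (hasFDerivAt_id (r t))
    have hcomp2 := hfd.comp (r t) hinc
    rw [pdx]
    exact congrFun (congrArg _ hcomp2.fderiv) (Pi.single j 1)
  have hsplit : F (1, fun j => v3 r j t)
      = F (1, 0) + ∑ j, v3 r j t * F (0, Pi.single j 1) := by
    have h1 : ((1 : ℝ), fun j => v3 r j t)
        = ((1 : ℝ), (0 : Fin 3 → ℝ))
          + ∑ j, (v3 r j t) • (((0 : ℝ), Pi.single j (1 : ℝ)) : ℝ × (Fin 3 → ℝ)) := by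
      refine Prod.ext ?_ ?_
      · simp [Prod.fst_sum]
      · funext k
        simp [Prod.snd_sum, Finset.sum_apply, Pi.single_apply, Finset.sum_ite_eq',
          mul_ite, mul_one, mul_zero]
    rw [h1, map_add, map_sum]
    congr 1
    exact Finset.sum_congr rfl fun j _ => by rw [map_smul]; rfl
  have hfin : pdt f t (r t) + ∑ j, pdx f j t (r t) * v3 r j t = F (1, fun j => v3 r j t) := by
    rw [hsplit, hpdt]
    congr 1
    exact Finset.sum_congr rfl fun j _ => by rw [hpdx j]; ring
  rw [hfin]
  exact hcomp

lemma cross_curl (A : Fin 3 → ℝ × (Fin 3 → ℝ) → ℝ) (t : ℝ) (x v : Fin 3 → ℝ) (l : Fin 3) :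
    cross v (curl A t x) l = ∑ i, v i * (pdx (A i) l t x - pdx (A l) i t x) := by
  fin_cases l <;>
    simp [cross, curl, Fin.sum_univ_three] <;>
    ring

/-- a superluminal curve (tachyon) satisfies the Euler–Lagrange
equations of `ℒ(t,x,v) = m₀c²√(|v|²/c²−1) + (e/c)⟨A,v⟩ − eV` iff it satisfies
the tachyonic Lorentz-force equations of motion. -/
theorem stmt9 (c e m₀ : ℝ) (hc : 0 < c) (hm : 0 < m₀)
    (A : Fin 3 → ℝ × (Fin 3 → ℝ) → ℝ) (V : ℝ × (Fin 3 → ℝ) → ℝ)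
    (hA : ∀ l, ContDiff ℝ 1 (A l)) (hV : ContDiff ℝ 1 V)
    (L : ℝ → (Fin 3 → ℝ) → (Fin 3 → ℝ) → ℝ)
    (hL : ∀ t x v, L t x v =
      m₀ * c ^ 2 * Real.sqrt ((∑ i, v i ^ 2) / c ^ 2 - 1)
        + (e / c) * (∑ i, A i (t, x) * v i) - e * V (t, x))
    (r : ℝ → Fin 3 → ℝ)
    (hr1 : ∀ l, Differentiable ℝ fun t => r t l)
    (hr2 : ∀ l, Differentiable ℝ (v3 r l))
    (hsup : ∀ t, c < Real.sqrt (∑ p, v3 r p t ^ 2)) :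
    (∀ t, ∀ l : Fin 3,
        pdX L l t (r t) (fun i => v3 r i t)
          - deriv (fun τ => pdV L l τ (r τ) (fun i => v3 r i τ)) t = 0)
    ↔
    (∀ t, ∀ l : Fin 3,
        deriv (fun τ => m₀ * v3 r l τ /
            Real.sqrt ((∑ p, v3 r p τ ^ 2) / c ^ 2 - 1)) t =
          e * ((1 / c) * cross (fun i => v3 r i t) (curl A t (r t)) l
              - (1 / c) * pdt (A l) t (r t) - pdx V l t (r t))) := by
  have hS : ∀ τ, c ^ 2 < ∑ p, v3 r p τ ^ 2 := by
    intro τ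
    have h := hsup τ
    have hnn : (0 : ℝ) ≤ ∑ p, v3 r p τ ^ 2 := by positivity
    nlinarith [Real.sq_sqrt hnn, Real.sqrt_nonneg (∑ p, v3 r p τ ^ 2)]
  have hyτ : ∀ τ, 0 < (∑ p, v3 r p τ ^ 2) / c ^ 2 - 1 := by
    intro τ
    rw [sub_pos, lt_div_iff₀ (by positivity)]
    simpa using hS τ
  have hSdiff : Differentiable ℝ (fun τ => (∑ p, v3 r p τ ^ 2) / c ^ 2 - 1) := by
    apply Differentiable.sub_const
    apply Differentiable.div_const
    exact Differentiable.fun_sum fun p _ => (hr2 p).pow 2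
  have hPdiff : ∀ (l : Fin 3) τ, DifferentiableAt ℝ
      (fun σ => m₀ * v3 r l σ / Real.sqrt ((∑ p, v3 r p σ ^ 2) / c ^ 2 - 1)) τ := by
    intro l τ
    apply DifferentiableAt.div
    · exact ((hr2 l) τ).const_mul m₀
    · exact (hSdiff τ).sqrt (hyτ τ).ne'
    · exact (Real.sqrt_pos.mpr (hyτ τ)).ne'
  -- key identity
  have key : ∀ t (l : Fin 3),
      pdX L l t (r t) (fun i => v3 r i t)
        - deriv (fun τ => pdV L l τ (r τ) (fun i => v3 r i τ)) t
      = e * ((1 / c) * cross (fun i => v3 r i t) (curl A t (r t)) l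
            - (1 / c) * pdt (A l) t (r t) - pdx V l t (r t))
        - deriv (fun τ => m₀ * v3 r l τ /
            Real.sqrt ((∑ p, v3 r p τ ^ 2) / c ^ 2 - 1)) t := by
    intro t l
    have hfun : (fun τ => pdV L l τ (r τ) (fun i => v3 r i τ))
        = fun τ => m₀ * v3 r l τ / Real.sqrt ((∑ p, v3 r p τ ^ 2) / c ^ 2 - 1)
            + (e / c) * A l (τ, r τ) := by
      funext τ
      rw [pdV_eq c e m₀ hc A V L hL τ (r τ) (fun i => v3 r i τ) (hS τ) l]
    have hAc := chain_curve (A l) (hA l) r hr1 t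
    have hD : deriv (fun τ => pdV L l τ (r τ) (fun i => v3 r i τ)) t
        = deriv (fun τ => m₀ * v3 r l τ /
            Real.sqrt ((∑ p, v3 r p τ ^ 2) / c ^ 2 - 1)) t
          + (e / c) * (pdt (A l) t (r t) + ∑ j, pdx (A l) j t (r t) * v3 r j t) := by
      rw [hfun]
      rw [deriv_fun_add (hPdiff l t) ((hAc.differentiableAt).const_mul (e / c))]
      congr 1
      rw [deriv_const_mul _ hAc.differentiableAt, hAc.deriv]
    rw [hD, pdX_eq c e m₀ A V hA hV L hL t (r t) (fun i => v3 r i t) l,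
      cross_curl A t (r t) (fun i => v3 r i t) l]
    simp only [Fin.sum_univ_three]
    ring
  constructor
  · intro h t l
    have h1 := key t l
    have h2 := h t l
    linarith
  · intro h t l
    have h1 := key t l
    have h2 := h t l
    linarith
end

section
/- Let c > 0, m₀ > 0, let ψ : ℝ × ℝ³ → ℝ be a C¹ function, and define μ = ψ/(m₀²c²) and the mass function m̃₀ = m₀·exp(μ). Let r : ℝ → ℝ³ be a twice differentiable curve with |dr/dt| < c everywhere, write v = dr/dt, γ(t) = 1/√(1 − |v(t)|²/c²), and let F_L : ℝ → ℝ³ be any continuous function (the Lorentz force along the curve). Then the following two equations are equivalent (one holds for all t if and only if the other does): (i) (d/dt)(m₀ γ v) = F_L − (1/(m₀c²)) γ v (dψ/dt) − (1/m₀)√(1 − v²/c²)·(grad ψ)(t, r(t)), where dψ/dt = ⟨v, grad ψ⟩ + ∂ψ/∂t evaluated at (t, r(t)); (ii) (d/dt)(m̃₀(t,r(t)) γ v) = (m̃₀(t,r(t))/m₀)·F_L − c²√(1 − v²/c²)·(grad m̃₀)(t, r(t)), where grad denotes the spatial gradient. In particular, in absence of the electromagnetic field (F_L = 0) the particle moves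 as if having the nonconstant rest mass m̃₀, subject to the Dicke force F_D = −c²√(1 − v²/c²)·grad m̃₀. -/
lemma pdt_eq (ψ : ℝ × (Fin 3 → ℝ) → ℝ) (hψ : Differentiable ℝ ψ) (t : ℝ) (x : Fin 3 → ℝ) :
    pdt ψ t x = fderiv ℝ ψ (t, x) (1, 0) := by
  have hcurve : HasDerivAt (fun τ : ℝ => (τ, x)) ((1 : ℝ), (0 : Fin 3 → ℝ)) t :=
    (hasDerivAt_id t).prodMk (hasDerivAt_const t x)
  exact ((hψ (t, x)).hasFDerivAt.comp_hasDerivAt t hcurve).deriv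

lemma pdx_eq (ψ : ℝ × (Fin 3 → ℝ) → ℝ) (hψ : Differentiable ℝ ψ) (i : Fin 3) (t : ℝ)
    (x : Fin 3 → ℝ) :
    pdx ψ i t x = fderiv ℝ ψ (t, x) (0, Pi.single i 1) := by
  have hin : HasFDerivAt (fun y : Fin 3 → ℝ => ((t : ℝ), y))
      (ContinuousLinearMap.inr ℝ ℝ (Fin 3 → ℝ)) x :=
    (hasFDerivAt_const t x).prodMk (hasFDerivAt_id x)
  have := ((hψ (t, x)).hasFDerivAt.comp x hin).fderiv
  unfold pdx
  rw [show (fun y => ψ (t, y)) = ψ ∘ Prod.mk t from rfl, this]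
  simp

lemma slice_diff_s10 (ψ : ℝ × (Fin 3 → ℝ) → ℝ) (hψ : Differentiable ℝ ψ) (t : ℝ) :
    Differentiable ℝ (fun y : Fin 3 → ℝ => ψ (t, y)) := by
  intro x
  have hin : HasFDerivAt (fun y : Fin 3 → ℝ => ((t : ℝ), y))
      (ContinuousLinearMap.inr ℝ ℝ (Fin 3 → ℝ)) x :=
    (hasFDerivAt_const t x).prodMk (hasFDerivAt_id x)
  exact ((hψ (t, x)).hasFDerivAt.comp x hin).differentiableAt

lemma fderiv_decomp (ψ : ℝ × (Fin 3 → ℝ) → ℝ) (hψ : Differentiable ℝ ψ) (t : ℝ)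
    (x : Fin 3 → ℝ) (v : Fin 3 → ℝ) :
    fderiv ℝ ψ (t, x) (1, v) = (∑ p, v p * pdx ψ p t x) + pdt ψ t x := by
  have hv : ((0 : ℝ), v) = ∑ p, v p • (((0 : ℝ), Pi.single p (1 : ℝ)) : ℝ × (Fin 3 → ℝ)) := by
    ext j
    · simp [Prod.fst_sum]
    · simp [Prod.snd_sum, Finset.sum_apply, Pi.single_apply, mul_ite, Finset.sum_ite_eq']
  have h1 : ((1 : ℝ), v) = ((1 : ℝ), (0 : Fin 3 → ℝ)) + ((0 : ℝ), v) := by simp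
  rw [h1, map_add, hv, map_sum, pdt_eq ψ hψ]
  simp only [map_smul, smul_eq_mul]
  rw [add_comm]
  congr 1
  exact Finset.sum_congr rfl fun p _ => by rw [pdx_eq ψ hψ]

/-- with the mass function `m̃₀ = m₀·exp(ψ/(m₀²c²))`, the equation of
motion `(d/dt)(m₀γv) = F_L + F_C − (1/m₀)√(1−v²/c²)·grad ψ` is equivalent to
`(d/dt)(m̃₀γv) = (m̃₀/m₀)·F_L − c²√(1−v²/c²)·grad m̃₀` (Dicke force form). -/
theorem stmt10 (c m₀ : ℝ) (hc : 0 < c) (hm : 0 < m₀)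
    (ψ : ℝ × (Fin 3 → ℝ) → ℝ) (hψ : ContDiff ℝ 1 ψ)
    (mt : ℝ × (Fin 3 → ℝ) → ℝ)
    (hmt : ∀ p, mt p = m₀ * Real.exp (ψ p / (m₀ ^ 2 * c ^ 2)))
    (r : ℝ → Fin 3 → ℝ)
    (hr1 : ∀ l, Differentiable ℝ fun t => r t l)
    (hr2 : ∀ l, Differentiable ℝ (v3 r l))
    (hsub : ∀ t, Real.sqrt (∑ p, v3 r p t ^ 2) < c)
    (FL : ℝ → Fin 3 → ℝ) (hFL : Continuous FL) :
    (∀ t, ∀ l : Fin 3,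
        deriv (fun τ => m₀ * v3 r l τ /
            Real.sqrt (1 - (∑ p, v3 r p τ ^ 2) / c ^ 2)) t =
          FL t l
          - (1 / (m₀ * c ^ 2)) *
              (1 / Real.sqrt (1 - (∑ p, v3 r p t ^ 2) / c ^ 2)) * v3 r l t *
              ((∑ p, v3 r p t * pdx ψ p t (r t)) + pdt ψ t (r t))
          - (1 / m₀) * Real.sqrt (1 - (∑ p, v3 r p t ^ 2) / c ^ 2) *
              pdx ψ l t (r t))
    ↔
    (∀ t, ∀ l : Fin 3,
        deriv (fun τ => mt (τ, r τ) * v3 r l τ /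
            Real.sqrt (1 - (∑ p, v3 r p τ ^ 2) / c ^ 2)) t =
          mt (t, r t) / m₀ * FL t l
          - c ^ 2 * Real.sqrt (1 - (∑ p, v3 r p t ^ 2) / c ^ 2) *
              pdx mt l t (r t)) := by
  have hψd : Differentiable ℝ ψ := hψ.differentiable one_ne_zero
  have hm0 : m₀ ≠ 0 := hm.ne'
  have hc0 : c ≠ 0 := hc.ne'
  have key : ∀ (t : ℝ) (l : Fin 3),
      (deriv (fun τ => m₀ * v3 r l τ /
            Real.sqrt (1 - (∑ p, v3 r p τ ^ 2) / c ^ 2)) t =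
          FL t l
          - (1 / (m₀ * c ^ 2)) *
              (1 / Real.sqrt (1 - (∑ p, v3 r p t ^ 2) / c ^ 2)) * v3 r l t *
              ((∑ p, v3 r p t * pdx ψ p t (r t)) + pdt ψ t (r t))
          - (1 / m₀) * Real.sqrt (1 - (∑ p, v3 r p t ^ 2) / c ^ 2) *
              pdx ψ l t (r t))
      ↔
      (deriv (fun τ => mt (τ, r τ) * v3 r l τ /
            Real.sqrt (1 - (∑ p, v3 r p τ ^ 2) / c ^ 2)) t =
          mt (t, r t) / m₀ * FL t l
          - c ^ 2 * Real.sqrt (1 - (∑ p, v3 r p t ^ 2) / c ^ 2) *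
              pdx mt l t (r t)) := by
    intro t l
    have hSnn : (0:ℝ) ≤ ∑ p, v3 r p t ^ 2 := Finset.sum_nonneg fun p _ => sq_nonneg _
    have hSlt : (∑ p, v3 r p t ^ 2) < c ^ 2 := by
      nlinarith [hsub t, Real.sq_sqrt hSnn, Real.sqrt_nonneg (∑ p, v3 r p t ^ 2)]
    have h1pos : 0 < 1 - (∑ p, v3 r p t ^ 2) / c ^ 2 := by
      rw [sub_pos, div_lt_one (by positivity)]; exact hSlt
    have hgpos : 0 < Real.sqrt (1 - (∑ p, v3 r p t ^ 2) / c ^ 2) := Real.sqrt_pos.2 h1pos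
    have hg0 : Real.sqrt (1 - (∑ p, v3 r p t ^ 2) / c ^ 2) ≠ 0 := hgpos.ne'
    have hSd : DifferentiableAt ℝ (fun τ => ∑ p, v3 r p τ ^ 2) t :=
      DifferentiableAt.fun_sum fun p _ => ((hr2 p) t).pow 2
    have hgd : DifferentiableAt ℝ
        (fun τ => Real.sqrt (1 - (∑ p, v3 r p τ ^ 2) / c ^ 2)) t := by
      exact DifferentiableAt.sqrt ((differentiableAt_const _).sub (hSd.div_const _)) h1pos.ne'
    obtain ⟨D, HD⟩ : ∃ D, HasDerivAt
        (fun τ => v3 r l τ / Real.sqrt (1 - (∑ p, v3 r p τ ^ 2) / c ^ 2)) D t :=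
      ⟨_, ((hr2 l t).div hgd hg0).hasDerivAt⟩
    have hI : deriv (fun τ => m₀ * v3 r l τ /
        Real.sqrt (1 - (∑ p, v3 r p τ ^ 2) / c ^ 2)) t = m₀ * D := by
      have heq : (fun τ => m₀ * v3 r l τ / Real.sqrt (1 - (∑ p, v3 r p τ ^ 2) / c ^ 2))
          = fun τ => m₀ * (v3 r l τ / Real.sqrt (1 - (∑ p, v3 r p τ ^ 2) / c ^ 2)) := by
        funext τ; ring
      rw [heq]; exact (HD.const_mul m₀).deriv
    have hVd : HasDerivAt (fun τ => r τ) (fun p => v3 r p t) t :=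
      hasDerivAt_pi.2 fun p => (hr1 p t).hasDerivAt
    have hcurve : HasDerivAt (fun τ => ((τ : ℝ), r τ)) (1, fun p => v3 r p t) t :=
      (hasDerivAt_id t).prodMk hVd
    obtain ⟨Dψ, hψc, hDψ⟩ : ∃ Dψv, HasDerivAt (fun τ => ψ (τ, r τ)) Dψv t ∧
        Dψv = (∑ p, v3 r p t * pdx ψ p t (r t)) + pdt ψ t (r t) :=
      ⟨_, (hψd (t, r t)).hasFDerivAt.comp_hasDerivAt t hcurve,
        fderiv_decomp ψ hψd t (r t) _⟩
    set X := Real.exp (ψ (t, r t) / (m₀ ^ 2 * c ^ 2)) with hX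
    have hXpos : 0 < X := Real.exp_pos _
    have hX0 : X ≠ 0 := hXpos.ne'
    have hmtX : mt (t, r t) = m₀ * X := by rw [hmt]
    have hE : HasDerivAt (fun τ => mt (τ, r τ)) (m₀ * (X * (Dψ / (m₀ ^ 2 * c ^ 2)))) t := by
      have heq : (fun τ => mt (τ, r τ))
          = fun τ => m₀ * Real.exp (ψ (τ, r τ) / (m₀ ^ 2 * c ^ 2)) := funext fun τ => hmt _
      rw [heq]
      exact ((hψc.div_const _).exp).const_mul m₀
    have hII : deriv (fun τ => mt (τ, r τ) * v3 r l τ /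
        Real.sqrt (1 - (∑ p, v3 r p τ ^ 2) / c ^ 2)) t
        = m₀ * (X * (Dψ / (m₀ ^ 2 * c ^ 2))) *
            (v3 r l t / Real.sqrt (1 - (∑ p, v3 r p t ^ 2) / c ^ 2)) + m₀ * X * D := by
      have heq : (fun τ => mt (τ, r τ) * v3 r l τ /
            Real.sqrt (1 - (∑ p, v3 r p τ ^ 2) / c ^ 2))
          = fun τ => mt (τ, r τ) *
            (v3 r l τ / Real.sqrt (1 - (∑ p, v3 r p τ ^ 2) / c ^ 2)) := by
        funext τ; ring
      rw [heq, (hE.fun_mul HD).deriv, hmtX]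
    have hPmt : pdx mt l t (r t)
        = m₀ * (X * ((m₀ ^ 2 * c ^ 2)⁻¹ * pdx ψ l t (r t))) := by
      have hL : HasFDerivAt (fun y => ψ (t, y))
          (fderiv ℝ (fun y => ψ (t, y)) (r t)) (r t) :=
        (slice_diff_s10 ψ hψd t (r t)).hasFDerivAt
      have h1 := hL.const_mul (m₀ ^ 2 * c ^ 2)⁻¹
      have h2 := (Real.hasDerivAt_exp ((m₀ ^ 2 * c ^ 2)⁻¹ * ψ (t, r t))).comp_hasFDerivAt
        (r t) h1
      have h3 := h2.const_mul m₀
      have heq : (fun y => mt (t, y))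
          = fun y => m₀ * Real.exp ((m₀ ^ 2 * c ^ 2)⁻¹ * ψ (t, y)) := by
        funext y; rw [hmt, div_eq_inv_mul]
      have h3' : HasFDerivAt (fun y => mt (t, y))
          (m₀ • (Real.exp ((m₀ ^ 2 * c ^ 2)⁻¹ * ψ (t, r t)) •
            ((m₀ ^ 2 * c ^ 2)⁻¹ • fderiv ℝ (fun y => ψ (t, y)) (r t)))) (r t) := by
        rw [heq]; exact h3
      unfold pdx
      rw [h3'.fderiv]
      have : Real.exp ((m₀ ^ 2 * c ^ 2)⁻¹ * ψ (t, r t)) = X := by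
        rw [hX, div_eq_inv_mul]
      simp only [ContinuousLinearMap.coe_smul', Pi.smul_apply, smul_eq_mul]
      rw [this]
    rw [hI, hII, ← hDψ, hmtX, hPmt]
    set G := Real.sqrt (1 - (∑ p, v3 r p t ^ 2) / c ^ 2) with hG
    set P := pdx ψ l t (r t) with hP
    set F := FL t l with hF
    set W := v3 r l t with hW
    have hfac : m₀ * (X * (Dψ / (m₀ ^ 2 * c ^ 2))) * (W / G) + m₀ * X * D
        - (m₀ * X / m₀ * F - c ^ 2 * G * (m₀ * (X * ((m₀ ^ 2 * c ^ 2)⁻¹ * P))))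
        = X * (m₀ * D - (F - 1 / (m₀ * c ^ 2) * (1 / G) * W * Dψ - 1 / m₀ * G * P)) := by
      field_simp
      ring
    constructor <;> intro h
    · rw [← sub_eq_zero] at h ⊢
      rw [hfac, h, mul_zero]
    · rw [← sub_eq_zero] at h ⊢
      rcases mul_eq_zero.1 (hfac ▸ h) with h' | h'
      · exact absurd h' hX0
      · exact h'
  exact ⟨fun h t l => (key t l).1 (h t l), fun h t l => (key t l).2 (h t l)⟩
end

section
/- Let c > 0, m₀ > 0, let ψ : ℝ × ℝ³ → ℝ be a C¹ function, and define μ = −ψ/(m₀²c²) and the mass function m̃₀ = m₀·exp(μ). Let r : ℝ → ℝ³ be a twice differentiable curve with |dr/dt| > c everywhere, write v = dr/dt, Γ(t) = 1/√(|v(t)|²/c² − 1), and let F_L : ℝ → ℝ³ be any continuous function (the Lorentz force along the curve). Then the following two equations are equivalent (one holds for all t if and only if the other does): (i) (d/dt)(m₀ Γ v) = F_L + (1/(m₀c²)) Γ v (dψ/dt) − (1/m₀)√(v²/c² − 1)·(grad ψ)(t, r(t)), where dψ/dt = ⟨v, grad ψ⟩ + ∂ψ/∂t evaluated at (t, r(t));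 (ii) (d/dt)(m̃₀(t,r(t)) Γ v) = (m̃₀(t,r(t))/m₀)·F_L + c²√(v²/c² − 1)·(grad m̃₀)(t, r(t)), where grad denotes the spatial gradient. In particular, for tachyons the Dicke force takes the form F_D = c²√(v²/c² − 1)·grad m̃₀. -/
lemma clm_sum (L : (Fin 3 → ℝ) →L[ℝ] ℝ) (w : Fin 3 → ℝ) :
    L w = ∑ p, w p * L (Pi.single p 1) := by
  have hv : w = ∑ p, w p • (Pi.single p 1 : Fin 3 → ℝ) := by
    funext j
    simp [Finset.sum_apply, Pi.single_apply]
  conv_lhs => rw [hv]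
  simp [smul_eq_mul]

/-- for tachyons, with the mass function `m̃₀ = m₀·exp(−ψ/(m₀²c²))`,
the equation of motion `(d/dt)(m₀Γv) = F_L + F_C − (1/m₀)√(v²/c²−1)·grad ψ` is
equivalent to `(d/dt)(m̃₀Γv) = (m̃₀/m₀)·F_L + c²√(v²/c²−1)·grad m̃₀`
(Dicke force form). -/
theorem stmt11 (c m₀ : ℝ) (hc : 0 < c) (hm : 0 < m₀)
    (ψ : ℝ × (Fin 3 → ℝ) → ℝ) (hψ : ContDiff ℝ 1 ψ)
    (mt : ℝ × (Fin 3 → ℝ) → ℝ)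
    (hmt : ∀ p, mt p = m₀ * Real.exp (-ψ p / (m₀ ^ 2 * c ^ 2)))
    (r : ℝ → Fin 3 → ℝ)
    (hr1 : ∀ l, Differentiable ℝ fun t => r t l)
    (hr2 : ∀ l, Differentiable ℝ (v3 r l))
    (hsup : ∀ t, c < Real.sqrt (∑ p, v3 r p t ^ 2))
    (FL : ℝ → Fin 3 → ℝ) (hFL : Continuous FL) :
    (∀ t, ∀ l : Fin 3,
        deriv (fun τ => m₀ * v3 r l τ /
            Real.sqrt ((∑ p, v3 r p τ ^ 2) / c ^ 2 - 1)) t =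
          FL t l
          + (1 / (m₀ * c ^ 2)) *
              (1 / Real.sqrt ((∑ p, v3 r p t ^ 2) / c ^ 2 - 1)) * v3 r l t *
              ((∑ p, v3 r p t * pdx ψ p t (r t)) + pdt ψ t (r t))
          - (1 / m₀) * Real.sqrt ((∑ p, v3 r p t ^ 2) / c ^ 2 - 1) *
              pdx ψ l t (r t))
    ↔
    (∀ t, ∀ l : Fin 3,
        deriv (fun τ => mt (τ, r τ) * v3 r l τ /
            Real.sqrt ((∑ p, v3 r p τ ^ 2) / c ^ 2 - 1)) t =
          mt (t, r t) / m₀ * FL t l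
          + c ^ 2 * Real.sqrt ((∑ p, v3 r p t ^ 2) / c ^ 2 - 1) *
              pdx mt l t (r t)) := by
  have hc2 : (0:ℝ) < c ^ 2 := by positivity
  have hψd : Differentiable ℝ ψ := hψ.differentiable one_ne_zero
  have hS : ∀ t, 0 < (∑ p, v3 r p t ^ 2) / c ^ 2 - 1 := by
    intro t
    have h2 : (0:ℝ) ≤ ∑ p, v3 r p t ^ 2 := by positivity
    have h3 : c ^ 2 < ∑ p, v3 r p t ^ 2 := by
      nlinarith [hsup t, Real.sq_sqrt h2, Real.sqrt_nonneg (∑ p, v3 r p t ^ 2)]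
    rw [sub_pos, lt_div_iff₀ hc2, one_mul]
    exact h3
  have hGpos : ∀ t, 0 < Real.sqrt ((∑ p, v3 r p t ^ 2) / c ^ 2 - 1) :=
    fun t => Real.sqrt_pos.2 (hS t)
  have hSdiff : ∀ t, DifferentiableAt ℝ
      (fun τ => (∑ p, v3 r p τ ^ 2) / c ^ 2 - 1) t := by
    intro t
    exact ((DifferentiableAt.fun_sum fun p _ => ((hr2 p) t).pow 2).div_const _).sub_const 1
  have hGdiff : ∀ t, DifferentiableAt ℝ
      (fun τ => Real.sqrt ((∑ p, v3 r p τ ^ 2) / c ^ 2 - 1)) t :=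
    fun t => (hSdiff t).sqrt (hS t).ne'
  have hA : ∀ t (l : Fin 3), DifferentiableAt ℝ
      (fun τ => v3 r l τ / Real.sqrt ((∑ p, v3 r p τ ^ 2) / c ^ 2 - 1)) t :=
    fun t l => ((hr2 l) t).div (hGdiff t) (hGpos t).ne'
  -- the curve τ ↦ (τ, r τ) and its derivative
  have hγ : ∀ t, HasDerivAt (fun τ => ((τ, r τ) : ℝ × (Fin 3 → ℝ)))
      ((1 : ℝ), fun l => v3 r l t) t := by
    intro t
    exact (hasDerivAt_id t).prodMk (hasDerivAt_pi.2 fun l => ((hr1 l) t).hasDerivAt)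
  -- partial derivatives via the full Fréchet derivative
  have hpdt : ∀ t (x : Fin 3 → ℝ), pdt ψ t x = fderiv ℝ ψ (t, x) (1, 0) := by
    intro t x
    have h : HasDerivAt (fun τ => ((τ, x) : ℝ × (Fin 3 → ℝ))) ((1 : ℝ), (0 : Fin 3 → ℝ)) t :=
      (hasDerivAt_id t).prodMk (hasDerivAt_const t x)
    exact ((hψd (t, x)).hasFDerivAt.comp_hasDerivAt t h).deriv
  have hLg : ∀ t (x : Fin 3 → ℝ), HasFDerivAt (fun y => ψ (t, y))
      ((fderiv ℝ ψ (t, x)).comp (ContinuousLinearMap.inr ℝ ℝ (Fin 3 → ℝ))) x :=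
    fun t x => (hψd (t, x)).hasFDerivAt.comp x (hasFDerivAt_prodMk_right t x)
  have hpdx : ∀ t (x : Fin 3 → ℝ) (i : Fin 3),
      pdx ψ i t x = fderiv ℝ ψ (t, x) (0, Pi.single i 1) := by
    intro t x i
    unfold pdx
    rw [(hLg t x).fderiv]
    rfl
  -- chain rule for ψ along the curve
  have hφ : ∀ t, HasDerivAt (fun τ => ψ (τ, r τ))
      ((∑ p, v3 r p t * pdx ψ p t (r t)) + pdt ψ t (r t)) t := by
    intro t
    have h1 := (hψd (t, r t)).hasFDerivAt.comp_hasDerivAt t (hγ t)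
    refine h1.congr_deriv ?_
    have hv : (((1 : ℝ), fun l => v3 r l t) : ℝ × (Fin 3 → ℝ)) =
        ((1, 0) : ℝ × (Fin 3 → ℝ)) + ((0 : ℝ), fun l => v3 r l t) := by
      simp
    rw [hv, map_add, hpdt]
    have h2 : fderiv ℝ ψ (t, r t) ((0 : ℝ), fun l => v3 r l t) =
        ∑ p, v3 r p t * fderiv ℝ ψ (t, r t) (0, Pi.single p 1) := by
      have h3 := clm_sum ((fderiv ℝ ψ (t, r t)).comp
        (ContinuousLinearMap.inr ℝ ℝ (Fin 3 → ℝ))) (fun l => v3 r l t)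
      simpa using h3
    rw [h2]
    simp only [hpdx]
    ring
  have hmt2 : mt = fun p => m₀ * Real.exp ((m₀ ^ 2 * c ^ 2)⁻¹ * -ψ p) := by
    funext p
    rw [hmt p, div_eq_inv_mul]
  -- derivative of the mass along the curve
  have hM : ∀ t, HasDerivAt (fun τ => mt (τ, r τ))
      (mt (t, r t) * ((m₀ ^ 2 * c ^ 2)⁻¹ *
        -((∑ p, v3 r p t * pdx ψ p t (r t)) + pdt ψ t (r t)))) t := by
    intro t
    have h := (((hφ t).fun_neg.const_mul ((m₀ ^ 2 * c ^ 2)⁻¹)).exp).const_mul m₀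
    simp only [hmt2]
    refine h.congr_deriv ?_
    ring
  -- spatial gradient of the mass
  have hpmt : ∀ t (l : Fin 3), pdx mt l t (r t) =
      mt (t, r t) * ((m₀ ^ 2 * c ^ 2)⁻¹ * -pdx ψ l t (r t)) := by
    intro t l
    have hg := hLg t (r t)
    have h := ((hg.fun_neg.const_mul ((m₀ ^ 2 * c ^ 2)⁻¹)).exp).const_mul m₀
    have hps : pdx ψ l t (r t) =
        ((fderiv ℝ ψ (t, r t)).comp (ContinuousLinearMap.inr ℝ ℝ (Fin 3 → ℝ)))
          (Pi.single l 1) := by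
      unfold pdx
      rw [hg.fderiv]
    rw [hps]
    unfold pdx
    simp only [hmt2]
    rw [h.fderiv]
    simp only [ContinuousLinearMap.coe_smul', Pi.smul_apply, ContinuousLinearMap.neg_apply,
      smul_eq_mul]
    ring
  have hd1 : ∀ t (l : Fin 3), deriv (fun τ => m₀ * v3 r l τ /
      Real.sqrt ((∑ p, v3 r p τ ^ 2) / c ^ 2 - 1)) t =
      m₀ * deriv (fun τ => v3 r l τ /
        Real.sqrt ((∑ p, v3 r p τ ^ 2) / c ^ 2 - 1)) t := by
    intro t l
    simp only [mul_div_assoc]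
    exact deriv_const_mul m₀ (hA t l)
  have hd2 : ∀ t (l : Fin 3), deriv (fun τ => mt (τ, r τ) * v3 r l τ /
      Real.sqrt ((∑ p, v3 r p τ ^ 2) / c ^ 2 - 1)) t =
      (mt (t, r t) * ((m₀ ^ 2 * c ^ 2)⁻¹ *
        -((∑ p, v3 r p t * pdx ψ p t (r t)) + pdt ψ t (r t)))) *
        (v3 r l t / Real.sqrt ((∑ p, v3 r p t ^ 2) / c ^ 2 - 1)) +
      mt (t, r t) * deriv (fun τ => v3 r l τ /
        Real.sqrt ((∑ p, v3 r p τ ^ 2) / c ^ 2 - 1)) t := by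
    intro t l
    simp only [mul_div_assoc]
    exact ((hM t).mul (hA t l).hasDerivAt).deriv
  have hMpos : ∀ t, 0 < mt (t, r t) := by
    intro t
    rw [hmt (t, r t)]
    exact mul_pos hm (Real.exp_pos _)
  constructor
  · intro h t l
    have H := h t l
    rw [hd1 t l] at H
    have ha : deriv (fun τ => v3 r l τ /
        Real.sqrt ((∑ p, v3 r p τ ^ 2) / c ^ 2 - 1)) t =
        (FL t l
          + (1 / (m₀ * c ^ 2)) *
              (1 / Real.sqrt ((∑ p, v3 r p t ^ 2) / c ^ 2 - 1)) * v3 r l t *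
              ((∑ p, v3 r p t * pdx ψ p t (r t)) + pdt ψ t (r t))
          - (1 / m₀) * Real.sqrt ((∑ p, v3 r p t ^ 2) / c ^ 2 - 1) *
              pdx ψ l t (r t)) / m₀ := by
      rw [eq_div_iff hm.ne']
      linear_combination H
    rw [hd2 t l, hpmt t l, ha]
    have hgne := (hGpos t).ne'
    set g := Real.sqrt ((∑ p, v3 r p t ^ 2) / c ^ 2 - 1) with hgdef
    field_simp
    ring
  · intro h t l
    have H := h t l
    rw [hd2 t l, hpmt t l] at H
    have ha : deriv (fun τ => v3 r l τ /
        Real.sqrt ((∑ p, v3 r p τ ^ 2) / c ^ 2 - 1)) t =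
        (mt (t, r t) / m₀ * FL t l
          + c ^ 2 * Real.sqrt ((∑ p, v3 r p t ^ 2) / c ^ 2 - 1) *
              (mt (t, r t) * ((m₀ ^ 2 * c ^ 2)⁻¹ * -pdx ψ l t (r t)))
          - (mt (t, r t) * ((m₀ ^ 2 * c ^ 2)⁻¹ *
              -((∑ p, v3 r p t * pdx ψ p t (r t)) + pdt ψ t (r t)))) *
            (v3 r l t / Real.sqrt ((∑ p, v3 r p t ^ 2) / c ^ 2 - 1))) /
          mt (t, r t) := by
      rw [eq_div_iff (hMpos t).ne']
      linear_combination H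
    rw [hd1 t l, ha]
    have hgne := (hGpos t).ne'
    have hMne := (hMpos t).ne'
    set g := Real.sqrt ((∑ p, v3 r p t ^ 2) / c ^ 2 - 1) with hgdef
    field_simp
    ring
end

section
/- Let c > 0, let ψ : ℝ × ℝ³ → ℝ be a C¹ function, let r : ℝ → ℝ³ be a twice differentiable curve with |r'(t)| = c for all t, set e_v(t) = r'(t)/c, let w : ℝ → ℝ be a function with w(t) > 0 for all t, and let F : ℝ → ℝ³ be a function with ⟨F(t), e_v(t)⟩ = 0 for all t. Suppose that for all t the equation w(t)·[e_v'(t) − ⟨e_v(t), e_v'(t)⟩·e_v(t)] = F(t) − (1/w(t))·(c·(grad ψ)(t, r(t)) + (∂ψ/∂t)(t, r(t))·e_v(t)) holds. Then for all t: c·⟨e_v(t), (grad ψ)(t, r(t))⟩ + (∂ψ/∂t)(t, r(t)) = 0, i.e. the total derivative dψ/dt of ψ along the curve vanishes identically. -/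
/-- Direction of motion `e_v = r'/c` of a curve moving with the speed of light. -/
noncomputable def ev (c : ℝ) (r : ℝ → Fin 3 → ℝ) (l : Fin 3) (t : ℝ) : ℝ :=
  v3 r l t / c

/-- along solutions of the massless reduced equations
`w·[e_v' − ⟨e_v,e_v'⟩e_v] = F − (1/w)(c·grad ψ + (∂ψ/∂t)e_v)` with `F ⟂ e_v`,
the total derivative of `ψ` along the curve vanishes:
`c⟨e_v, grad ψ⟩ + ∂ψ/∂t = 0`. -/
theorem stmt13 (c : ℝ) (hc : 0 < c)
    (ψ : ℝ × (Fin 3 → ℝ) → ℝ) (hψ : ContDiff ℝ 1 ψ)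
    (r : ℝ → Fin 3 → ℝ)
    (hr1 : ∀ l, Differentiable ℝ fun t => r t l)
    (hr2 : ∀ l, Differentiable ℝ (v3 r l))
    (hlight : ∀ t, Real.sqrt (∑ p, v3 r p t ^ 2) = c)
    (w : ℝ → ℝ) (hw : ∀ t, 0 < w t)
    (F : ℝ → Fin 3 → ℝ)
    (hF : ∀ t, (∑ i, F t i * ev c r i t) = 0)
    (heq : ∀ t, ∀ l : Fin 3,
      w t * (deriv (fun τ => ev c r l τ) t
          - (∑ i, ev c r i t * deriv (fun τ => ev c r i τ) t) * ev c r l t) =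
        F t l - (1 / w t) *
          (c * pdx ψ l t (r t) + pdt ψ t (r t) * ev c r l t)) :
    ∀ t, c * (∑ i, ev c r i t * pdx ψ i t (r t)) + pdt ψ t (r t) = 0 := by
  intro t
  -- |e_v| = 1
  have hv2 : (∑ p, v3 r p t ^ 2) = c ^ 2 := by
    have h0 : (0:ℝ) ≤ ∑ p, v3 r p t ^ 2 := Finset.sum_nonneg fun i _ => sq_nonneg _
    have := congrArg (· ^ 2) (hlight t)
    simpa [Real.sq_sqrt h0] using this
  have hev2 : (∑ i, ev c r i t ^ 2) = 1 := by
    have : (∑ i, ev c r i t ^ 2) = (∑ p, v3 r p t ^ 2) / c ^ 2 := by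
      simp [ev, div_pow, Finset.sum_div]
    rw [this, hv2, div_self (pow_ne_zero _ hc.ne')]
  set S := ∑ i, ev c r i t * deriv (fun τ => ev c r i τ) t with hS
  have key : (∑ l, (w t * (deriv (fun τ => ev c r l τ) t - S * ev c r l t)) * ev c r l t)
      = ∑ l, (F t l - (1 / w t) *
          (c * pdx ψ l t (r t) + pdt ψ t (r t) * ev c r l t)) * ev c r l t :=
    Finset.sum_congr rfl fun l _ => by rw [heq t l]
  clear_value S
  have hL : (∑ l, (w t * (deriv (fun τ => ev c r l τ) t - S * ev c r l t)) * ev c r l t) = 0 := by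
    have h1 : (∑ l, (w t * (deriv (fun τ => ev c r l τ) t - S * ev c r l t)) * ev c r l t)
        = w t * (∑ l, ev c r l t * deriv (fun τ => ev c r l τ) t)
          - w t * S * (∑ l, ev c r l t ^ 2) := by
      rw [Finset.mul_sum, Finset.mul_sum, ← Finset.sum_sub_distrib]
      exact Finset.sum_congr rfl fun l _ => by ring
    rw [h1, ← hS, hev2]; ring
  have hR : (∑ l, (F t l - (1 / w t) *
        (c * pdx ψ l t (r t) + pdt ψ t (r t) * ev c r l t)) * ev c r l t)
      = - (1 / w t) * (c * (∑ i, ev c r i t * pdx ψ i t (r t)) + pdt ψ t (r t)) := by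
    have expand : (∑ l, (F t l - (1 / w t) *
          (c * pdx ψ l t (r t) + pdt ψ t (r t) * ev c r l t)) * ev c r l t)
        = (∑ l, F t l * ev c r l t)
          - (1 / w t) * c * (∑ l, ev c r l t * pdx ψ l t (r t))
          - (1 / w t) * pdt ψ t (r t) * (∑ l, ev c r l t ^ 2) := by
      rw [Finset.mul_sum, Finset.mul_sum, ← Finset.sum_sub_distrib, ← Finset.sum_sub_distrib]
      exact Finset.sum_congr rfl fun l _ => by ring
    rw [expand, hF t, hev2]; ring
  have h0 : - (1 / w t) * (c * (∑ i, ev c r i t * pdx ψ i t (r t)) + pdt ψ t (r t)) = 0 := by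
    rw [← hR, ← key, hL]
  have hwne : (1 / w t) ≠ 0 := one_div_ne_zero (hw t).ne'
  have := mul_eq_zero.mp h0
  rcases this with h | h
  · exact absurd h (neg_ne_zero.mpr hwne)
  · exact h
end

section
/- Let c > 0, e ∈ ℝ, let A : ℝ × ℝ³ → ℝ³, V : ℝ × ℝ³ → ℝ and ψ : ℝ × ℝ³ → ℝ be C¹ fields, and set φ_l(t,x) = (e/c)A^l(t,x) for l = 1,2,3 and φ_4(t,x) = −(e/c)V(t,x). Let t : ℝ → ℝ be twice differentiable with dt/ds > 0 everywhere and let r : ℝ → ℝ³ be twice differentiable (as a function of t) with |dr/dt| = c everywhere. Define q : ℝ → ℝ⁴ by q(s) = (r(t(s)), c·t(s)), and set q̇⁴(s) = c·(dt/ds)(s) > 0, v = dr/dt, and e_v = v/c. Suppose q satisfies, for all s and l = 1,2,3, the singular reduced equations (δ_{lj} − q̇^l q̇^j/Σ_p(q̇^p)²)·q̈^j = Σ_i q̇^i(∂φ_i/∂q^l − ∂φ_l/∂q^i) + (q̇^l q̇^i/√(Σ_p(q̇^p)²))(∂φ_i/∂q⁴ − ∂φ_4/∂q^i) + √(Σ_p(q̇^p)²)·(∂φ_4/∂q^l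 − ∂φ_l/∂q⁴) − ∂ψ/∂q^l − (∂ψ/∂q⁴)·q̇^l/√(Σ_p(q̇^p)²), with partial derivatives evaluated at q(s) and ∂/∂q⁴ = (1/c)∂/∂t. Then for all t in the range of t(s) it holds that q̇⁴·[e_v'(t) − ⟨e_v(t), e_v'(t)⟩·e_v(t)] = e·(e_v × (curl A) − (1/c)(∂A/∂t) − grad V + ⟨e_v, (1/c)(∂A/∂t) + grad V⟩·e_v) − (1/q̇⁴)·(c·grad ψ + (∂ψ/∂t)·e_v), with the fields evaluated at (t, r(t)). -/
/-- Derivative `e_v'` of the direction of motion with respect to `t`. -/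
noncomputable def evd (c : ℝ) (r : ℝ → Fin 3 → ℝ) (l : Fin 3) (t : ℝ) : ℝ :=
  deriv (fun τ => v3 r l τ / c) t

set_option maxHeartbeats 1000000 in
/-- if the curve `q(s) = (r(t(s)), c·t(s))`, moving with the speed
of light, satisfies the singular reduced equations of a massless particle, then
at every `t = T(s)` in the range of `T` (where `q̇⁴ = c·T'(s)`) the
three-dimensional massless equations of motion
`q̇⁴[e_v' − ⟨e_v,e_v'⟩e_v] = e(e_v × curl A − (1/c)∂A/∂t − grad V
+ ⟨e_v,(1/c)∂A/∂t + grad V⟩e_v) − (1/q̇⁴)(c·grad ψ + (∂ψ/∂t)e_v)` hold. -/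
theorem stmt16 (c e : ℝ) (hc : 0 < c)
    (A : Fin 3 → ℝ × (Fin 3 → ℝ) → ℝ) (V ψ : ℝ × (Fin 3 → ℝ) → ℝ)
    (hA : ∀ l, ContDiff ℝ 1 (A l)) (hV : ContDiff ℝ 1 V) (hψ : ContDiff ℝ 1 ψ)
    (φ : Fin 4 → ℝ × (Fin 3 → ℝ) → ℝ)
    (hφl : ∀ l : Fin 3, ∀ p, φ l.castSucc p = e / c * A l p)
    (hφ4 : ∀ p, φ 3 p = -(e / c) * V p)
    (T : ℝ → ℝ) (hT1 : Differentiable ℝ T) (hT2 : Differentiable ℝ (deriv T))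
    (hT' : ∀ s, 0 < deriv T s)
    (r : ℝ → Fin 3 → ℝ)
    (hr1 : ∀ l, Differentiable ℝ fun t => r t l)
    (hr2 : ∀ l, Differentiable ℝ (v3 r l))
    (hlight : ∀ t, Real.sqrt (∑ p, v3 r p t ^ 2) = c)
    (q : ℝ → Fin 4 → ℝ)
    (hq : ∀ s, q s = Fin.snoc (r (T s)) (c * T s))
    (hred : ∀ s, ∀ l : Fin 3,
      (∑ j : Fin 3,
        ((if l = j then (1 : ℝ) else 0)
            - vel q l.castSucc s * vel q j.castSucc s /
                (∑ p : Fin 3, vel q p.castSucc s ^ 2)) * acc q j.castSucc s) =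
        (∑ i : Fin 3, vel q i.castSucc s *
            (pdx (φ i.castSucc) l (T s) (r (T s))
              - pdx (φ l.castSucc) i (T s) (r (T s))))
        + (∑ i : Fin 3,
            vel q l.castSucc s * vel q i.castSucc s /
                Real.sqrt (∑ p : Fin 3, vel q p.castSucc s ^ 2) *
              ((1 / c) * pdt (φ i.castSucc) (T s) (r (T s))
                - pdx (φ 3) i (T s) (r (T s))))
        + Real.sqrt (∑ p : Fin 3, vel q p.castSucc s ^ 2) *
            (pdx (φ 3) l (T s) (r (T s))
              - (1 / c) * pdt (φ l.castSucc) (T s) (r (T s)))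
        - pdx ψ l (T s) (r (T s))
        - (1 / c) * pdt ψ (T s) (r (T s)) * vel q l.castSucc s /
            Real.sqrt (∑ p : Fin 3, vel q p.castSucc s ^ 2)) :
    ∀ s, ∀ l : Fin 3,
      (c * deriv T s) *
          (evd c r l (T s)
            - (∑ i, ev c r i (T s) * evd c r i (T s)) * ev c r l (T s)) =
        e * (cross (fun i => ev c r i (T s)) (curl A (T s) (r (T s))) l
            - (1 / c) * pdt (A l) (T s) (r (T s))
            - pdx V l (T s) (r (T s))
            + (∑ i, ev c r i (T s) *
                ((1 / c) * pdt (A i) (T s) (r (T s))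
                  + pdx V i (T s) (r (T s)))) * ev c r l (T s))
        - (1 / (c * deriv T s)) *
            (c * pdx ψ l (T s) (r (T s))
              + pdt ψ (T s) (r (T s)) * ev c r l (T s)) := by
  intro s l
  have hc' : c ≠ 0 := ne_of_gt hc
  have hd : deriv T s ≠ 0 := ne_of_gt (hT' s)
  -- differentiability of the fields in each variable
  have hAy : ∀ (i : Fin 3) (t : ℝ) (x : Fin 3 → ℝ),
      DifferentiableAt ℝ (fun y => A i (t, y)) x := fun i t x =>
    (((hA i).differentiable one_ne_zero) (t, x)).comp x
      ((differentiableAt_const t).prodMk differentiableAt_id)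
  have hAt : ∀ (i : Fin 3) (t : ℝ) (x : Fin 3 → ℝ),
      DifferentiableAt ℝ (fun τ => A i (τ, x)) t := fun i t x =>
    (((hA i).differentiable one_ne_zero) (t, x)).comp t
      (differentiableAt_id.prodMk (differentiableAt_const x))
  have hVy : ∀ (t : ℝ) (x : Fin 3 → ℝ),
      DifferentiableAt ℝ (fun y => V (t, y)) x := fun t x =>
    ((hV.differentiable one_ne_zero) (t, x)).comp x
      ((differentiableAt_const t).prodMk differentiableAt_id)
  -- velocity components
  have hvel : ∀ (j : Fin 3) (τ : ℝ),
      vel q j.castSucc τ = v3 r j (T τ) * deriv T τ := by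
    intro j τ
    have hfe : (fun σ => q σ j.castSucc) = (fun t => r t j) ∘ T := by
      funext σ; simp [hq, Function.comp]
    show deriv (fun σ => q σ j.castSucc) τ = _
    rw [hfe, deriv_comp τ ((hr1 j) (T τ)) (hT1 τ)]
    rfl
  -- acceleration components
  have hacc : ∀ j : Fin 3, acc q j.castSucc s =
      deriv (v3 r j) (T s) * deriv T s * deriv T s
        + v3 r j (T s) * deriv (deriv T) s := by
    intro j
    have h1 : vel q j.castSucc = fun τ => v3 r j (T τ) * deriv T τ :=
      funext (hvel j)
    have hdf : DifferentiableAt ℝ (fun τ => v3 r j (T τ)) s :=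
      ((hr2 j) (T s)).comp s (hT1 s)
    show deriv (vel q j.castSucc) s = _
    rw [h1, deriv_fun_mul hdf (hT2 s)]
    have h2 : deriv (fun τ => v3 r j (T τ)) s
        = deriv (v3 r j) (T s) * deriv T s := by
      have : (fun τ => v3 r j (T τ)) = (v3 r j) ∘ T := rfl
      rw [this, deriv_comp s ((hr2 j) (T s)) (hT1 s)]
    rw [h2]
  -- the light cone condition
  have hS : (∑ p, v3 r p (T s) ^ 2) = c ^ 2 := by
    have h0 : (0:ℝ) ≤ ∑ p, v3 r p (T s) ^ 2 :=
      Finset.sum_nonneg fun _ _ => sq_nonneg _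
    rw [← Real.sq_sqrt h0, hlight (T s)]
  have hS4 : (∑ p : Fin 3, vel q p.castSucc s ^ 2) = c ^ 2 * deriv T s ^ 2 := by
    have : (∑ p : Fin 3, vel q p.castSucc s ^ 2)
        = (∑ p, v3 r p (T s) ^ 2) * deriv T s ^ 2 := by
      rw [Finset.sum_mul]
      refine Finset.sum_congr rfl fun p _ => ?_
      rw [hvel p s]; ring
    rw [this, hS]
  have hsqrt : Real.sqrt (∑ p : Fin 3, vel q p.castSucc s ^ 2)
      = c * deriv T s := by
    rw [hS4, show c ^ 2 * deriv T s ^ 2 = (c * deriv T s) ^ 2 by ring,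
      Real.sqrt_sq (mul_pos hc (hT' s)).le]
  -- partial derivatives of φ
  have hpxA : ∀ (i k : Fin 3),
      pdx (φ i.castSucc) k (T s) (r (T s)) = e / c * pdx (A i) k (T s) (r (T s)) := by
    intro i k
    have hfun : (fun y => φ i.castSucc ((T s), y)) = fun y => e / c * A i ((T s), y) :=
      funext fun y => hφl i ((T s), y)
    show (fderiv ℝ (fun y => φ i.castSucc ((T s), y)) (r (T s))) (Pi.single k 1) = _
    rw [hfun, fderiv_const_mul (hAy i (T s) (r (T s))) (e / c)]
    simp [pdx]
  have hpx4 : ∀ k : Fin 3,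
      pdx (φ 3) k (T s) (r (T s)) = -(e / c) * pdx V k (T s) (r (T s)) := by
    intro k
    have hfun : (fun y => φ 3 ((T s), y)) = fun y => -(e / c) * V ((T s), y) :=
      funext fun y => hφ4 ((T s), y)
    show (fderiv ℝ (fun y => φ 3 ((T s), y)) (r (T s))) (Pi.single k 1) = _
    rw [hfun, fderiv_const_mul (hVy (T s) (r (T s))) (-(e / c))]
    simp [pdx]
  have hptA : ∀ i : Fin 3,
      pdt (φ i.castSucc) (T s) (r (T s)) = e / c * pdt (A i) (T s) (r (T s)) := by
    intro i
    have hfun : (fun τ => φ i.castSucc (τ, r (T s))) = fun τ => e / c * A i (τ, r (T s)) :=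
      funext fun τ => hφl i (τ, r (T s))
    show deriv (fun τ => φ i.castSucc (τ, r (T s))) (T s) = _
    rw [hfun, deriv_const_mul _ (hAt i (T s) (r (T s)))]
    rfl
  -- e_v and its derivative
  have hev : ∀ i : Fin 3, ev c r i (T s) = v3 r i (T s) / c := fun _ => rfl
  have hevd : ∀ i : Fin 3, evd c r i (T s) = deriv (v3 r i) (T s) / c := by
    intro i
    show deriv (fun τ => v3 r i τ / c) (T s) = _
    rw [deriv_div_const]
  have hfrac1 : ∀ i j : Fin 3,
      vel q i.castSucc s * vel q j.castSucc s /
          (∑ p : Fin 3, vel q p.castSucc s ^ 2)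
        = v3 r i (T s) * v3 r j (T s) / c ^ 2 := by
    intro i j
    rw [hvel i s, hvel j s, hS4]
    field_simp
  have hfrac2 : ∀ i j : Fin 3,
      vel q i.castSucc s * vel q j.castSucc s /
          Real.sqrt (∑ p : Fin 3, vel q p.castSucc s ^ 2)
        = v3 r i (T s) * v3 r j (T s) * deriv T s / c := by
    intro i j
    rw [hvel i s, hvel j s, hsqrt]
    field_simp
  have hfrac3 :
      1 / c * pdt ψ (T s) (r (T s)) * vel q l.castSucc s /
          Real.sqrt (∑ p : Fin 3, vel q p.castSucc s ^ 2)
        = pdt ψ (T s) (r (T s)) * v3 r l (T s) / c ^ 2 := by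
    rw [hvel l s, hsqrt]
    field_simp
  have key := hred s l
  simp only [hfrac1, hfrac2, hfrac3] at key
  simp only [hsqrt] at key
  simp only [Fin.sum_univ_three, hvel, hacc, hpxA, hpx4, hptA] at key
  have hS3 : v3 r 0 (T s) ^ 2 + v3 r 1 (T s) ^ 2 + v3 r 2 (T s) ^ 2 = c ^ 2 := by
    rw [← hS, Fin.sum_univ_three]
  apply mul_left_cancel₀ hd
  have hX : ∀ X : ℝ, deriv T s * (1 / (c * deriv T s) * X) = X / c := by
    intro X; field_simp
  conv_rhs => rw [mul_sub, hX]
  simp only [hev, hevd, cross, curl, Fin.sum_univ_three]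
  fin_cases l <;>
    simp only [Fin.mk_zero, Fin.mk_one, Fin.reduceFinMk, Fin.isValue, Matrix.cons_val_zero, Matrix.cons_val_one, Matrix.head_cons,
      Matrix.cons_val_two, Matrix.tail_cons, Fin.reduceEq, if_true, if_false,
      reduceIte, one_mul, zero_sub, neg_mul, sub_zero] at key ⊢
  · linear_combination (norm := (field_simp; ring)) key + deriv (deriv T) s * v3 r 0 (T s) / c ^ 2 * hS3
  · linear_combination (norm := (field_simp; ring)) key + deriv (deriv T) s * v3 r 1 (T s) / c ^ 2 * hS3
  · linear_combination (norm := (field_simp; ring)) key + deriv (deriv T) s * v3 r 2 (T s) / c ^ 2 * hS3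
end
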